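/- arXiv:1303.4701 — 9 statements merged into one kernel-verified Lean document; each statement's English description precedes it below -/
import Mathlib

section
/- Let n ≥ 2 be an integer and let α be a real number with 0 ≤ α < n − 2 that is not an integer. Then there exists an n×n doubly nonnegative matrix A such that A^α (defined by the functional calculus) is not doubly nonnegative. -/
open Matrix Filter Set Topology

open Polynomial

lemma dn_conj_pow {n : ℕ} (U D : Matrix (Fin n) (Fin n) ℝ) (hU : U * Uᴴ = 1) (k : ℕ) :
    (U * D * Uᴴ) ^ k = U * D ^ k * Uᴴ := by
  have hU' : Uᴴ * U = 1 := mul_eq_one_comm.mp hU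
  induction k with
  | zero => rw [pow_zero, pow_zero, mul_one]; exact hU.symm ▸ (one_mul (1:Matrix (Fin n) (Fin n) ℝ)) ▸ rfl
  | succ k ih =>
      rw [pow_succ, ih, pow_succ]
      calc U * D ^ k * Uᴴ * (U * D * Uᴴ) = U * D ^ k * (Uᴴ * U) * D * Uᴴ := by
            noncomm_ring
        _ = U * (D ^ k * D) * Uᴴ := by rw [hU']; noncomm_ring

lemma dn_aeval_conj {n : ℕ} (U : Matrix (Fin n) (Fin n) ℝ) (hU : U * Uᴴ = 1)
    (d : Fin n → ℝ) (p : Polynomial ℝ) :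
    Polynomial.aeval (U * Matrix.diagonal d * Uᴴ) p
      = U * Matrix.diagonal (fun i => p.eval (d i)) * Uᴴ := by
  rw [Polynomial.aeval_eq_sum_range]
  have h : ∀ k ∈ Finset.range (p.natDegree+1), p.coeff k • (U * Matrix.diagonal d * Uᴴ) ^ k
      = U * (p.coeff k • Matrix.diagonal (fun j => d j ^ k)) * Uᴴ := by
    intro k _
    rw [dn_conj_pow U _ hU, Matrix.diagonal_pow, Matrix.mul_smul, Matrix.smul_mul]
    congr
  rw [Finset.sum_congr rfl h, ← Finset.sum_mul, ← Finset.mul_sum]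
  congr 1
  congr 1
  ext i j
  by_cases hij : i = j
  · subst hij
    simp [Matrix.sum_apply, Polynomial.eval_eq_sum_range]
  · simp [Matrix.sum_apply, Matrix.diagonal_apply_ne _ hij]

noncomputable def dnb (β : ℝ) (k : ℕ) : ℝ :=
  (∏ j ∈ Finset.range k, (β - j)) / (Nat.factorial k)

lemma dnb_zero (β : ℝ) : dnb β 0 = 1 := by simp [dnb]

lemma dnb_succ (β : ℝ) (k : ℕ) : ((k:ℝ)+1) * dnb β (k+1) = β * dnb (β-1) k := by
  have h : ∏ j ∈ Finset.range (k+1), (β - j) = β * ∏ j ∈ Finset.range k, ((β-1) - j) := by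
    rw [Finset.prod_range_succ', mul_comm]
    congr 1
    · simp
    · exact Finset.prod_congr rfl fun j _ => by push_cast; ring
  have hf : (Nat.factorial (k+1) : ℝ) = ((k:ℝ)+1) * Nat.factorial k := by
    rw [Nat.factorial_succ]
    push_cast
    ring
  have hk0 : ((k:ℝ)+1) ≠ 0 := by positivity
  have hfk : (Nat.factorial k : ℝ) ≠ 0 := by
    exact_mod_cast Nat.factorial_ne_zero k
  rw [dnb, dnb, h, hf]
  field_simp

lemma dn_bin : ∀ (K : ℕ) (β : ℝ),
    Tendsto (fun t : ℝ => ((1+t) ^ β - ∑ k ∈ Finset.range (K+1), dnb β k * t ^ k) / t ^ (K+1))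
      (𝓝[≠] (0:ℝ)) (𝓝 (dnb β (K+1))) := by
  intro K
  induction K with
  | zero =>
      intro β
      have hd : HasDerivAt (fun t : ℝ => (1+t) ^ β) (1 * β * (1+(0:ℝ)) ^ (β-1)) 0 :=
        ((hasDerivAt_id (0:ℝ)).const_add 1).rpow_const (by norm_num)
      have h := hasDerivAt_iff_tendsto_slope.mp hd
      have hfun : (slope (fun t : ℝ => (1+t) ^ β) 0)
          = fun t : ℝ => ((1+t) ^ β - ∑ k ∈ Finset.range 1, dnb β k * t ^ k) / t ^ 1 := by
        funext t
        rw [slope_def_field]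
        simp [dnb_zero, Real.one_rpow]
      rw [hfun] at h
      convert h using 2
      simp [dnb]
  | succ K ih =>
      intro β
      have hmem : ∀ᶠ t in 𝓝[≠] (0:ℝ), (1:ℝ) + t ≠ 0 := by
        have : ∀ᶠ t in 𝓝 (0:ℝ), (1:ℝ) + t ≠ 0 := by
          have hc : ContinuousAt (fun t : ℝ => 1 + t) 0 := by fun_prop
          have := hc.eventually_ne (by norm_num : (1:ℝ) + 0 ≠ 0)
          exact this
        exact this.filter_mono nhdsWithin_le_nhds
      have hff' : ∀ᶠ t in 𝓝[≠] (0:ℝ), HasDerivAt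
          (fun t => (1+t)^β - ∑ k ∈ Finset.range (K+2), dnb β k * t ^ k)
          (β * (1+t)^(β-1) - ∑ k ∈ Finset.range (K+2), dnb β k * ((k:ℝ) * t ^ (k-1))) t := by
        filter_upwards [hmem] with t ht
        have h1 : HasDerivAt (fun t : ℝ => (1+t)^β) (1 * β * (1+t)^(β-1)) t :=
          ((hasDerivAt_id t).const_add 1).rpow_const (Or.inl ht)
        have h2 : HasDerivAt (fun t : ℝ => ∑ k ∈ Finset.range (K+2), dnb β k * t ^ k)
            (∑ k ∈ Finset.range (K+2), dnb β k * ((k:ℝ) * t ^ (k-1))) t := by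
          apply HasDerivAt.fun_sum
          intro k _
          exact (hasDerivAt_pow k t).const_mul (dnb β k)
        simpa using h1.fun_sub h2
      have hgg' : ∀ᶠ t in 𝓝[≠] (0:ℝ), HasDerivAt (fun t : ℝ => t ^ (K+2))
          ((↑(K+2):ℝ) * t ^ (K+1)) t := by
        filter_upwards with t
        simpa using hasDerivAt_pow (K+2) t
      have hg' : ∀ᶠ t in 𝓝[≠] (0:ℝ), (↑(K+2):ℝ) * t ^ (K+1) ≠ 0 := by
        filter_upwards [self_mem_nhdsWithin] with t ht
        have : t ≠ 0 := ht
        positivity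
      have hfa : Tendsto (fun t : ℝ => (1+t)^β - ∑ k ∈ Finset.range (K+2), dnb β k * t ^ k)
          (𝓝[≠] (0:ℝ)) (𝓝 0) := by
        have hc : ContinuousAt (fun t : ℝ => (1+t)^β - ∑ k ∈ Finset.range (K+2), dnb β k * t ^ k) 0 := by
          apply ContinuousAt.sub
          · exact (Real.continuousAt_rpow_const (1+0) β (Or.inl (by norm_num))).comp (by fun_prop)
          · fun_prop
        have hval : (1+(0:ℝ))^β - ∑ k ∈ Finset.range (K+2), dnb β k * (0:ℝ) ^ k = 0 := by
          rw [Finset.sum_eq_single 0]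
          · simp [dnb_zero, Real.one_rpow]
          · intro k _ hk
            simp [zero_pow hk]
          · simp
        have := hc.tendsto
        rw [hval] at this
        exact this.mono_left nhdsWithin_le_nhds
      have hga : Tendsto (fun t : ℝ => t ^ (K+2)) (𝓝[≠] (0:ℝ)) (𝓝 0) := by
        have : ContinuousAt (fun t : ℝ => t ^ (K+2)) 0 := by fun_prop
        have h := this.tendsto
        rw [show (0:ℝ) ^ (K+2) = 0 by simp] at h
        exact h.mono_left nhdsWithin_le_nhds
      have hS : ∀ t : ℝ, ∑ k ∈ Finset.range (K+2), dnb β k * ((k:ℝ) * t ^ (k-1))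
          = β * ∑ k ∈ Finset.range (K+1), dnb (β-1) k * t ^ k := by
        intro t
        rw [Finset.sum_range_succ', Finset.mul_sum]
        simp only [Nat.cast_zero, zero_mul, mul_zero, add_zero]
        apply Finset.sum_congr rfl
        intro k _
        have h := dnb_succ β k
        have hk : (k + 1) - 1 = k := by omega
        rw [hk]
        push_cast
        linear_combination t ^ k * h
      have hdiv : Tendsto (fun t : ℝ =>
          (β * (1+t)^(β-1) - ∑ k ∈ Finset.range (K+2), dnb β k * ((k:ℝ) * t ^ (k-1))) /
            ((↑(K+2):ℝ) * t ^ (K+1)))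
          (𝓝[≠] (0:ℝ)) (𝓝 (dnb β (K+2))) := by
        have lim2 := (ih (β-1)).const_mul (β / (↑(K+2):ℝ))
        have hval : β / (↑(K+2):ℝ) * dnb (β-1) (K+1) = dnb β (K+2) := by
          have h := dnb_succ β (K+1)
          have hee : dnb β (K+1+1) = dnb β (K+2) := rfl
          rw [hee] at h
          have hK0 : ((K:ℝ)+1+1) ≠ 0 := by positivity
          have hc : ((K+2 : ℕ) : ℝ) = (K:ℝ)+1+1 := by push_cast; ring
          push_cast at h
          have h2 : dnb β (K+2) = β * dnb (β-1) (K+1) / ((K:ℝ)+1+1) := by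
            rw [eq_div_iff hK0, mul_comm]
            exact h
          rw [hc, h2]
          ring
        rw [hval] at lim2
        apply lim2.congr'
        filter_upwards [self_mem_nhdsWithin] with t ht
        have ht0 : t ≠ 0 := ht
        rw [hS t]
        have hK0 : ((K:ℝ)+2) ≠ 0 := by positivity
        have htp : t ^ (K+1) ≠ 0 := pow_ne_zero _ ht0
        push_cast
        field_simp
      have := HasDerivAt.lhopital_zero_nhdsNE hff' hgg' hg' hfa hga hdiv
      convert this using 2 <;> norm_num

lemma dn_bin_mu (K : ℕ) (β μ : ℝ) :
    Tendsto (fun t : ℝ =>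
        ((1+μ*t) ^ β - ∑ k ∈ Finset.range (K+1), dnb β k * μ ^ k * t ^ k) / t ^ (K+1))
      (𝓝[>] (0:ℝ)) (𝓝 (dnb β (K+1) * μ ^ (K+1))) := by
  rcases eq_or_ne μ 0 with hμ | hμ
  · subst hμ
    have hfun : ∀ t : ℝ,
        ((1+0*t) ^ β - ∑ k ∈ Finset.range (K+1), dnb β k * (0:ℝ) ^ k * t ^ k) / t ^ (K+1) = 0 := by
      intro t
      have hsum : ∑ k ∈ Finset.range (K+1), dnb β k * (0:ℝ) ^ k * t ^ k = 1 := by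
        rw [Finset.sum_eq_single 0]
        · simp [dnb_zero]
        · intro k _ hk
          simp [zero_pow hk]
        · simp
      rw [hsum]
      simp [Real.one_rpow]
    have h0 : dnb β (K+1) * (0:ℝ) ^ (K+1) = 0 := by simp
    rw [h0]
    exact Tendsto.congr (fun t => (hfun t).symm) tendsto_const_nhds
  · have hmap : Tendsto (fun t : ℝ => μ * t) (𝓝[>] (0:ℝ)) (𝓝[≠] (0:ℝ)) := by
      rw [tendsto_nhdsWithin_iff]
      constructor
      · have : Tendsto (fun t : ℝ => μ * t) (𝓝 (0:ℝ)) (𝓝 (μ * 0)) :=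
          (continuous_const.mul continuous_id).tendsto 0
        rw [mul_zero] at this
        exact this.mono_left nhdsWithin_le_nhds
      · filter_upwards [self_mem_nhdsWithin] with t ht
        exact mul_ne_zero hμ (ne_of_gt ht)
    have hcomp := ((dn_bin K β).comp hmap).const_mul (μ ^ (K+1))
    have hval : μ ^ (K+1) * dnb β (K+1) = dnb β (K+1) * μ ^ (K+1) := mul_comm _ _
    rw [hval] at hcomp
    apply hcomp.congr
    intro t
    have hμp : μ ^ (K+1) ≠ 0 := pow_ne_zero _ hμ
    rcases eq_or_ne t 0 with ht | ht
    · subst ht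
      simp [Function.comp, zero_pow (Nat.succ_ne_zero K), mul_pow]
    · have htp : t ^ (K+1) ≠ 0 := pow_ne_zero _ ht
      simp only [Function.comp_apply, mul_pow]
      rw [show ∀ a : ℝ, μ ^ (K+1) * (a / (μ ^ (K+1) * t ^ (K+1))) = a / t ^ (K+1) by
        intro a; field_simp]
      congr 2
      exact Finset.sum_congr rfl fun k _ => by ring

def dnB (n : ℕ) : Matrix (Fin n) (Fin n) ℝ :=
  Matrix.of fun i j => if (i:ℕ)+1 = (j:ℕ) ∨ (j:ℕ)+1 = (i:ℕ) then 1 else 0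

lemma dnB_apply (n : ℕ) (i j : Fin n) :
    dnB n i j = if (i:ℕ)+1 = (j:ℕ) ∨ (j:ℕ)+1 = (i:ℕ) then 1 else 0 := rfl

lemma dnB_nonneg (n : ℕ) (i j : Fin n) : 0 ≤ dnB n i j := by
  rw [dnB_apply]; split <;> norm_num

lemma dnB_herm (n : ℕ) : (dnB n).IsHermitian := by
  unfold Matrix.IsHermitian
  ext i j
  rw [Matrix.conjTranspose_apply, dnB_apply, dnB_apply]
  rw [star_trivial]
  exact if_congr or_comm rfl rfl

lemma dnB_pow (n : ℕ) [NeZero n] (k : ℕ) :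
    (∀ j : Fin n, k < (j : ℕ) → ((dnB n) ^ k) 0 j = 0)
    ∧ (∀ hk : k < n, ((dnB n) ^ k) 0 ⟨k, hk⟩ = 1) := by
  induction k with
  | zero =>
    constructor
    · intro j hj
      rw [pow_zero]
      apply Matrix.one_apply_ne
      intro h
      rw [← h] at hj
      simp at hj
    · intro hk
      rw [pow_zero]
      have : (⟨0, hk⟩ : Fin n) = 0 := by ext; simp
      rw [this]
      exact Matrix.one_apply_eq 0
  | succ k ih =>
    obtain ⟨ihA, ihB⟩ := ih
    have hBz : ∀ l j : Fin n, dnB n l j ≠ 0 → ((l:ℕ)+1 = (j:ℕ) ∨ (j:ℕ)+1 = (l:ℕ)) := by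
      intro l j h
      by_contra hc
      rw [dnB_apply, if_neg hc] at h
      exact h rfl
    constructor
    · intro j hj
      rw [pow_succ, Matrix.mul_apply]
      apply Finset.sum_eq_zero
      intro l _
      rcases eq_or_ne (dnB n l j) 0 with h | h
      · rw [h, mul_zero]
      · have h2 := hBz l j h
        have hl : k < (l:ℕ) := by omega
        rw [ihA l hl, zero_mul]
    · intro hk
      rw [pow_succ, Matrix.mul_apply]
      rw [Finset.sum_eq_single (⟨k, by omega⟩ : Fin n)]
      · have h1 : ((dnB n) ^ k) 0 ⟨k, by omega⟩ = 1 := ihB (by omega)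
        have h2 : dnB n ⟨k, by omega⟩ ⟨k+1, hk⟩ = 1 := by
          rw [dnB_apply]
          simp
        rw [h1, h2, one_mul]
      · intro l _ hl
        rcases eq_or_ne (dnB n l ⟨k+1, hk⟩) 0 with h | h
        · rw [h, mul_zero]
        · have h2 := hBz l _ h
          simp only [Fin.val_mk] at h2
          have hlk : (l:ℕ) ≠ k := fun hh => hl (Fin.ext (by simp [hh]))
          have hgt : k < (l:ℕ) := by omega
          rw [ihA l hgt, zero_mul]
      · intro h
        exact absurd (Finset.mem_univ _) h

lemma dn_entry {n : ℕ} (V : Matrix (Fin n) (Fin n) ℝ) (e : Fin n → ℝ) (a b : Fin n) :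
    (V * Matrix.diagonal e * Vᴴ) a b = ∑ i, V a i * e i * V b i := by
  rw [Matrix.mul_apply]
  apply Finset.sum_congr rfl
  intro i _
  rw [Matrix.mul_diagonal, Matrix.conjTranspose_apply, star_trivial]

/-- Functional calculus for real symmetric matrices: apply `f` to the eigenvalues
in a spectral decomposition `A = U D Uᵀ`. -/
noncomputable def matFun {n : ℕ} (f : ℝ → ℝ) (A : Matrix (Fin n) (Fin n) ℝ) :
    Matrix (Fin n) (Fin n) ℝ :=
  if hA : A.IsHermitian then
    (hA.eigenvectorUnitary : Matrix (Fin n) (Fin n) ℝ) *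
      Matrix.diagonal (fun i => f (hA.eigenvalues i)) *
      (hA.eigenvectorUnitary : Matrix (Fin n) (Fin n) ℝ)ᴴ
  else 0

/-- A real matrix is doubly nonnegative if it is (symmetric) positive semidefinite
with all entries nonnegative. -/
def DN {n : ℕ} (A : Matrix (Fin n) (Fin n) ℝ) : Prop :=
  A.PosSemidef ∧ ∀ i j, 0 ≤ A i j

lemma dn_matFun_eq {n : ℕ} (f : ℝ → ℝ) (A U : Matrix (Fin n) (Fin n) ℝ)
    (hU : U * Uᴴ = 1) (d : Fin n → ℝ)
    (hdec : A = U * Matrix.diagonal d * Uᴴ) :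
    matFun f A = U * Matrix.diagonal (fun i => f (d i)) * Uᴴ := by
  classical
  have hA : A.IsHermitian := by
    rw [hdec]
    unfold Matrix.IsHermitian
    simp [Matrix.conjTranspose_mul, Matrix.mul_assoc]
  set U' : Matrix (Fin n) (Fin n) ℝ := (hA.eigenvectorUnitary : Matrix (Fin n) (Fin n) ℝ) with hU'
  have hU'1 : U' * U'ᴴ = 1 := by
    have := hA.eigenvectorUnitary.2
    rw [Matrix.mem_unitaryGroup_iff] at this
    simpa [Matrix.star_eq_conjTranspose] using this
  set S : Finset ℝ := Finset.image d Finset.univ ∪ Finset.image hA.eigenvalues Finset.univ with hS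
  set p : Polynomial ℝ := Lagrange.interpolate S id f with hp
  have hev : ∀ x ∈ S, p.eval x = f x := by
    intro x hx
    exact Lagrange.eval_interpolate_at_node f (Set.injOn_id _) hx
  have hspec : A = U' * Matrix.diagonal hA.eigenvalues * U'ᴴ := by
    have h := hA.spectral_theorem
    simpa [Matrix.star_eq_conjTranspose, Function.comp] using h
  have h1 : Polynomial.aeval A p = U' * Matrix.diagonal (fun i => p.eval (hA.eigenvalues i)) * U'ᴴ := by
    conv_lhs => rw [hspec]
    exact dn_aeval_conj _ hU'1 _ p
  have h2 : Polynomial.aeval A p = U * Matrix.diagonal (fun i => p.eval (d i)) * Uᴴ := by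
    conv_lhs => rw [hdec]
    exact dn_aeval_conj _ hU _ p
  have e1 : (fun i => p.eval (hA.eigenvalues i)) = fun i => f (hA.eigenvalues i) :=
    funext fun i => hev _ (by simp [hS])
  have e2 : (fun i => p.eval (d i)) = fun i => f (d i) :=
    funext fun i => hev _ (by simp [hS])
  unfold matFun
  rw [dif_pos hA, ← e1, ← e2, ← h1, ← h2]

theorem stmt_2 (n : ℕ) (hn : 2 ≤ n) (α : ℝ) (hα0 : 0 ≤ α) (hαn : α < (n : ℝ) - 2)
    (hαint : ∀ m : ℕ, α ≠ m) :
    ∃ A : Matrix (Fin n) (Fin n) ℝ, DN A ∧ ¬ DN (matFun (fun x => x ^ α) A) := by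
  haveI : NeZero n := ⟨by omega⟩
  have hα_pos : 0 < α := lt_of_le_of_ne hα0 (fun h => hαint 0 (by simpa using h.symm))
  set m := ⌈α⌉₊ with hm
  have hm1 : 1 ≤ m := Nat.one_le_ceil_iff.mpr hα_pos
  have hαm : α < m := lt_of_le_of_ne (Nat.le_ceil α) (hαint m)
  have hmα : (m:ℝ) - 1 < α := by
    have := Nat.ceil_lt_add_one hα0
    linarith
  have hmn2 : m ≤ n - 2 := by
    have hcast : ((n - 2 : ℕ) : ℝ) = (n:ℝ) - 2 := by
      push_cast [hn]
      ring
    apply Nat.ceil_le.mpr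
    rw [hcast]
    exact le_of_lt hαn
  have hmn : m + 1 < n := by omega
  set j₀ : Fin n := ⟨m+1, hmn⟩ with hj₀
  set B := dnB n with hB
  have hBH : B.IsHermitian := dnB_herm n
  set V : Matrix (Fin n) (Fin n) ℝ := (hBH.eigenvectorUnitary : Matrix (Fin n) (Fin n) ℝ) with hV
  set μ : Fin n → ℝ := hBH.eigenvalues with hμ
  have hV1 : V * Vᴴ = 1 := by
    have h := hBH.eigenvectorUnitary.2
    rw [Matrix.mem_unitaryGroup_iff] at h
    simpa [Matrix.star_eq_conjTranspose] using h
  have hBdec : B = V * Matrix.diagonal μ * Vᴴ := by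
    have h := hBH.spectral_theorem
    simpa [Matrix.star_eq_conjTranspose, Function.comp] using h
  set c : Fin n → ℝ := fun i => V 0 i * V j₀ i with hc
  have hMoment : ∀ k : ℕ, ∑ i, c i * μ i ^ k = (B ^ k) 0 j₀ := by
    intro k
    have hpow : B ^ k = V * Matrix.diagonal (fun i => μ i ^ k) * Vᴴ := by
      rw [hBdec, dn_conj_pow _ _ hV1, Matrix.diagonal_pow]
      rfl
    rw [hpow, dn_entry]
    exact Finset.sum_congr rfl fun i _ => by rw [hc]; ring
  have hZero : ∀ k : ℕ, k ≤ m → (B ^ k) 0 j₀ = 0 := by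
    intro k hk
    apply (dnB_pow n k).1 j₀
    rw [hj₀]
    simp
    omega
  have hOne : (B ^ (m+1)) 0 j₀ = 1 := (dnB_pow n (m+1)).2 hmn
  have hneg : dnb α (m+1) < 0 := by
    have hprod : ∏ j ∈ Finset.range (m+1), (α - j) < 0 := by
      rw [Finset.prod_range_succ]
      apply mul_neg_of_pos_of_neg
      · apply Finset.prod_pos
        intro j hj
        rw [Finset.mem_range] at hj
        have hjm : (j:ℝ) + 1 ≤ m := by exact_mod_cast hj
        linarith
      · linarith
    have hfac : (0:ℝ) < (Nat.factorial (m+1) : ℝ) := by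
      exact_mod_cast Nat.factorial_pos (m+1)
    exact div_neg_of_neg_of_pos hprod hfac
  have hglim : Tendsto (fun t : ℝ => (∑ i, c i * (1 + μ i * t) ^ α) / t ^ (m+1))
      (𝓝[>] (0:ℝ)) (𝓝 (dnb α (m+1))) := by
    have hsum : Tendsto (fun t : ℝ => ∑ i, c i *
        (((1 + μ i * t) ^ α - ∑ k ∈ Finset.range (m+1), dnb α k * μ i ^ k * t ^ k) / t ^ (m+1)))
        (𝓝[>] (0:ℝ)) (𝓝 (∑ i, c i * (dnb α (m+1) * μ i ^ (m+1)))) :=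
      tendsto_finset_sum _ fun i _ => (dn_bin_mu m α (μ i)).const_mul (c i)
    have hval : ∑ i, c i * (dnb α (m+1) * μ i ^ (m+1)) = dnb α (m+1) := by
      have h1 : ∑ i, c i * (dnb α (m+1) * μ i ^ (m+1))
          = dnb α (m+1) * ∑ i, c i * μ i ^ (m+1) := by
        rw [Finset.mul_sum]
        exact Finset.sum_congr rfl fun i _ => by ring
      rw [h1, hMoment (m+1), hOne, mul_one]
    rw [hval] at hsum
    apply hsum.congr
    intro t
    have hP : ∑ i, c i * (∑ k ∈ Finset.range (m+1), dnb α k * μ i ^ k * t ^ k) = 0 := by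
      calc ∑ i, c i * ∑ k ∈ Finset.range (m+1), dnb α k * μ i ^ k * t ^ k
          = ∑ i, ∑ k ∈ Finset.range (m+1), (dnb α k * t ^ k) * (c i * μ i ^ k) := by
            apply Finset.sum_congr rfl
            intro i _
            rw [Finset.mul_sum]
            exact Finset.sum_congr rfl fun k _ => by ring
        _ = ∑ k ∈ Finset.range (m+1), ∑ i, (dnb α k * t ^ k) * (c i * μ i ^ k) :=
            Finset.sum_comm
        _ = ∑ k ∈ Finset.range (m+1), (dnb α k * t ^ k) * ((B ^ k) 0 j₀) := by
            apply Finset.sum_congr rfl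
            intro k _
            rw [← Finset.mul_sum, hMoment k]
        _ = 0 := by
            apply Finset.sum_eq_zero
            intro k hk
            rw [Finset.mem_range] at hk
            rw [hZero k (by omega), mul_zero]
    calc ∑ i, c i * (((1 + μ i * t) ^ α
            - ∑ k ∈ Finset.range (m+1), dnb α k * μ i ^ k * t ^ k) / t ^ (m+1))
        = ∑ i, (c i * (1 + μ i * t) ^ α
            - c i * (∑ k ∈ Finset.range (m+1), dnb α k * μ i ^ k * t ^ k)) / t ^ (m+1) := by
          exact Finset.sum_congr rfl fun i _ => by ring
      _ = (∑ i, (c i * (1 + μ i * t) ^ α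
            - c i * (∑ k ∈ Finset.range (m+1), dnb α k * μ i ^ k * t ^ k))) / t ^ (m+1) :=
          (Finset.sum_div _ _ _).symm
      _ = ((∑ i, c i * (1 + μ i * t) ^ α)
            - ∑ i, c i * (∑ k ∈ Finset.range (m+1), dnb α k * μ i ^ k * t ^ k)) / t ^ (m+1) := by
          rw [Finset.sum_sub_distrib]
      _ = (∑ i, c i * (1 + μ i * t) ^ α) / t ^ (m+1) := by rw [hP, sub_zero]
  have h1 : ∀ᶠ t in 𝓝[>] (0:ℝ), (∑ i, c i * (1 + μ i * t) ^ α) / t ^ (m+1) < 0 :=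
    hglim.eventually_lt_const hneg
  have h2 : ∀ᶠ t in 𝓝[>] (0:ℝ), ∀ i, 0 < 1 + μ i * t := by
    rw [eventually_all]
    intro i
    have hti : Tendsto (fun t : ℝ => 1 + μ i * t) (𝓝[>] (0:ℝ)) (𝓝 (1 + μ i * 0)) :=
      ((continuous_const.add (continuous_const.mul continuous_id)).tendsto 0).mono_left
        nhdsWithin_le_nhds
    rw [mul_zero, add_zero] at hti
    exact hti.eventually_const_lt (by norm_num)
  have h3 : ∀ᶠ t in 𝓝[>] (0:ℝ), 0 < t := eventually_mem_nhdsWithin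
  obtain ⟨t, hneg_t, hpos_t, ht0⟩ := (h1.and (h2.and h3)).exists
  set d : Fin n → ℝ := fun i => 1 + μ i * t with hd
  have hAdec : V * Matrix.diagonal d * Vᴴ = 1 + t • B := by
    have hdiag : Matrix.diagonal d = 1 + t • Matrix.diagonal μ := by
      ext i j
      rcases eq_or_ne i j with h | h
      · subst h
        simp [hd, Matrix.add_apply, Matrix.smul_apply, Matrix.diagonal_apply_eq,
          Matrix.one_apply_eq, smul_eq_mul]
        ring
      · simp [Matrix.add_apply, Matrix.smul_apply, Matrix.diagonal_apply_ne _ h,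
          Matrix.one_apply_ne h]
    rw [hdiag, Matrix.mul_add, Matrix.add_mul, Matrix.mul_one, hV1,
      Matrix.mul_smul, Matrix.smul_mul, ← hBdec]
  refine ⟨1 + t • B, ⟨?_, ?_⟩, ?_⟩
  · rw [← hAdec]
    exact (Matrix.posSemidef_diagonal_iff.mpr fun i => le_of_lt (hpos_t i)).mul_mul_conjTranspose_same V
  · intro i j
    rw [Matrix.add_apply, Matrix.smul_apply]
    have ha : (0:ℝ) ≤ (1 : Matrix (Fin n) (Fin n) ℝ) i j := by
      rw [Matrix.one_apply]
      split <;> norm_num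
    have hb : (0:ℝ) ≤ t • B i j := by
      rw [smul_eq_mul]
      exact mul_nonneg ht0.le (dnB_nonneg n i j)
    exact add_nonneg ha hb
  · have hmf : matFun (fun x => x ^ α) (1 + t • B)
        = V * Matrix.diagonal (fun i => d i ^ α) * Vᴴ :=
      dn_matFun_eq (fun x => x ^ α) (1 + t • B) V hV1 d hAdec.symm
    intro hDN
    have hent := hDN.2 0 j₀
    rw [hmf, dn_entry] at hent
    have hsum_eq : ∑ i, V 0 i * d i ^ α * V j₀ i = ∑ i, c i * (1 + μ i * t) ^ α :=
      Finset.sum_congr rfl fun i _ => by rw [hc, hd]; ring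
    rw [hsum_eq] at hent
    have hTpos : 0 < t ^ (m+1) := pow_pos ht0 _
    rcases div_neg_iff.mp hneg_t with ⟨_, hT⟩ | ⟨hlt, _⟩
    · linarith
    · linarith
end

section
/- Let n ≥ 2 be an integer, u > 0, β ∈ ℝ, and let α be a real number with 0 ≤ α < n − 2 + max(β, 0) such that α does not belong to the set {m + max(β, 0) : m = 0, 1, …, n − 3}. Then the function g(x) = x^α (x + u)^{−β} does not preserve DN_n: there exists an n×n doubly nonnegative matrix A such that g(A) (defined by the functional calculus) is not doubly nonnegative. -/
open Matrix Filter Set Topology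

section Stmt4Aux

open Polynomial
open scoped Nat



noncomputable def fall (t : ℝ) (d : ℕ) : ℝ := ∏ j ∈ Finset.range d, (t - j)

lemma fall_neg {t : ℝ} {m : ℕ} (h1 : (m : ℝ) < t) (h2 : t < m + 1) :
    fall t (m + 2) < 0 := by
  have h : fall t (m + 2) = fall t (m + 1) * (t - (m + 1)) := by
    rw [fall, fall, Finset.prod_range_succ]; push_cast; ring
  have hpos : 0 < fall t (m + 1) := by
    refine Finset.prod_pos fun j hj => ?_
    have hj' : j ≤ m := Nat.lt_succ_iff.mp (Finset.mem_range.mp hj)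
    have : (j : ℝ) ≤ m := by exact_mod_cast hj'
    linarith
  rw [h]
  exact mul_neg_of_pos_of_neg hpos (by linarith)

noncomputable def Pp (α β u : ℝ) : ℕ → Polynomial ℝ
  | 0 => 1
  | d + 1 =>
      Polynomial.C (α - d) * ((X + Polynomial.C u) * Pp α β u d)
        + Polynomial.C (-β - d) * (X * Pp α β u d)
        + X * ((X + Polynomial.C u) * derivative (Pp α β u d))

lemma Pp_natDegree_le (α β u : ℝ) : ∀ d, (Pp α β u d).natDegree ≤ d := by
  intro d
  induction d with
  | zero => simp [Pp]
  | succ d ih =>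
    rw [Pp]
    refine le_trans (natDegree_add_le _ _) (max_le (le_trans (natDegree_add_le _ _)
      (max_le ?_ ?_)) ?_)
    · refine le_trans (natDegree_C_mul_le _ _) (le_trans (natDegree_mul_le) ?_)
      have : (X + Polynomial.C u : Polynomial ℝ).natDegree ≤ 1 := (natDegree_X_add_C u).le
      omega
    · refine le_trans (natDegree_C_mul_le _ _) (le_trans (natDegree_mul_le) ?_)
      have : (X : Polynomial ℝ).natDegree ≤ 1 := natDegree_X_le
      omega
    · refine le_trans natDegree_mul_le ?_
      have h1 : (X : Polynomial ℝ).natDegree ≤ 1 := natDegree_X_le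
      have h2 : ((X + Polynomial.C u) * derivative (Pp α β u d)).natDegree ≤
          1 + (derivative (Pp α β u d)).natDegree := by
        refine le_trans natDegree_mul_le ?_
        have : (X + Polynomial.C u : Polynomial ℝ).natDegree ≤ 1 := (natDegree_X_add_C u).le
        omega
      have h3 : (derivative (Pp α β u d)).natDegree ≤ d - 1 :=
        le_trans (natDegree_derivative_le _) (by omega)
      rcases Nat.eq_zero_or_pos d with hd | hd
      · subst hd
        have : derivative (Pp α β u 0) = 0 := by simp [Pp]
        rw [this]
        simp
      · omega

lemma Pp_coeff (α β u : ℝ) : ∀ d, (Pp α β u d).coeff d = fall (α - β) d := by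
  intro d
  induction d with
  | zero => simp [Pp, fall]
  | succ d ih =>
    have hdeg := Pp_natDegree_le α β u d
    have hc0 : (Pp α β u d).coeff (d + 1) = 0 :=
      coeff_eq_zero_of_natDegree_lt (by omega)
    have hfall : fall (α - β) (d + 1) = fall (α - β) d * (α - β - d) := by
      rw [fall, fall, Finset.prod_range_succ]
    rw [Pp, hfall, ← ih]
    rw [coeff_add, coeff_add, coeff_C_mul, coeff_C_mul]
    have e1 : ((X + Polynomial.C u) * Pp α β u d).coeff (d + 1)
        = (Pp α β u d).coeff d := by
      rw [add_mul, coeff_add, coeff_X_mul, coeff_C_mul, hc0, mul_zero, add_zero]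
    have e2 : (X * Pp α β u d).coeff (d + 1) = (Pp α β u d).coeff d := coeff_X_mul _ _
    have e4 : (derivative (Pp α β u d)).coeff d = 0 := by
      rw [coeff_derivative, hc0, zero_mul]
    have e3 : (X * ((X + Polynomial.C u) * derivative (Pp α β u d))).coeff (d + 1)
        = (d : ℝ) * (Pp α β u d).coeff d := by
      rw [coeff_X_mul, add_mul, coeff_add, coeff_C_mul, e4, mul_zero, add_zero]
      cases d with
      | zero => simp [Pp]
      | succ e =>
        rw [coeff_X_mul, coeff_derivative]
        push_cast; ring
    rw [e1, e2, e3]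
    ring

lemma Pp_eval_zero (α β u : ℝ) : ∀ d, (Pp α β u d).eval 0 = u ^ d * fall α d := by
  intro d
  induction d with
  | zero => simp [Pp, fall]
  | succ d ih =>
    have hfall : fall α (d + 1) = fall α d * (α - d) := by
      rw [fall, fall, Finset.prod_range_succ]
    rw [Pp, hfall]
    simp only [eval_add, eval_mul, eval_C, eval_X, zero_add, zero_mul, mul_zero, ih]
    ring

noncomputable def Fd (α β u : ℝ) (d : ℕ) (x : ℝ) : ℝ :=
  x ^ (α - d) * (x + u) ^ (-β - d) * (Pp α β u d).eval x

lemma Fd_zero (α β u x : ℝ) : Fd α β u 0 x = x ^ α * (x + u) ^ (-β) := by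
  simp [Fd, Pp]

lemma hasDerivAt_Fd (α β u : ℝ) (hu : 0 < u) (d : ℕ) {x : ℝ} (hx : 0 < x) :
    HasDerivAt (Fd α β u d) (Fd α β u (d + 1) x) x := by
  have hxu : 0 < x + u := by linarith
  have h1 : HasDerivAt (fun y : ℝ => y ^ (α - d)) ((α - d) * x ^ (α - d - 1)) x :=
    Real.hasDerivAt_rpow_const (Or.inl hx.ne')
  have h2 : HasDerivAt (fun y : ℝ => (y + u) ^ (-β - d))
      ((-β - d) * (x + u) ^ (-β - d - 1)) x := by
    have hb : HasDerivAt (fun y : ℝ => y + u) 1 x := (hasDerivAt_id x).add_const u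
    have hr : HasDerivAt (fun t : ℝ => t ^ (-β - d))
        ((-β - d) * (x + u) ^ (-β - d - 1)) (x + u) :=
      Real.hasDerivAt_rpow_const (Or.inl hxu.ne')
    have h := hr.comp x hb; rw [mul_one] at h; exact h
  have h3 : HasDerivAt (fun y : ℝ => (Pp α β u d).eval y)
      ((derivative (Pp α β u d)).eval x) x := (Pp α β u d).hasDerivAt x
  have H := (h1.mul h2).mul h3
  have hFd : Fd α β u d = fun y : ℝ =>
      y ^ (α - d) * (y + u) ^ (-β - d) * (Pp α β u d).eval y := rfl
  rw [hFd]
  refine H.congr_deriv ?_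
  have c1 : α - ((d : ℝ) + 1) = α - d - 1 := by ring
  have c2 : -β - ((d : ℝ) + 1) = -β - d - 1 := by ring
  have e1 : x ^ (α - d) = x ^ (α - d - 1) * x := by
    rw [← Real.rpow_add_one hx.ne' (α - d - 1)]; ring_nf
  have e2 : (x + u) ^ (-β - d) = (x + u) ^ (-β - d - 1) * (x + u) := by
    rw [← Real.rpow_add_one hxu.ne' (-β - d - 1)]; ring_nf
  rw [Fd, Pp]
  push_cast [c1, c2]
  simp only [eval_add, eval_mul, eval_C, eval_X, Pi.mul_apply]
  rw [e1, e2]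
  ring

lemma iter_eq (α β u : ℝ) (hu : 0 < u) {a b : ℝ} (ha : 0 < a) (hab : a < b) :
    ∀ k, ∀ x ∈ Icc a b,
      iteratedDerivWithin k (fun x : ℝ => x ^ α * (x + u) ^ (-β)) (Icc a b) x
        = Fd α β u k x := by
  intro k
  induction k with
  | zero =>
    intro x hx
    rw [iteratedDerivWithin_zero, Fd_zero]
  | succ k ih =>
    intro x hx
    have hx0 : 0 < x := lt_of_lt_of_le ha hx.1
    rw [iteratedDerivWithin_succ,
      derivWithin_congr (fun y hy => ih y hy) (ih x hx)]
    exact ((hasDerivAt_Fd α β u hu k hx0).hasDerivWithinAt).derivWithin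
      (uniqueDiffOn_Icc hab x hx)

lemma contDiffOn_f (α β u : ℝ) (hu : 0 < u) (m : ℕ) {a b : ℝ} (ha : 0 < a) :
    ContDiffOn ℝ m (fun x : ℝ => x ^ α * (x + u) ^ (-β)) (Icc a b) := by
  intro x hx
  have hx0 : 0 < x := lt_of_lt_of_le ha hx.1
  have hxu : 0 < x + u := by linarith
  have h1 : ContDiffAt ℝ m (fun y : ℝ => y ^ α) x :=
    Real.contDiffAt_rpow_const_of_ne hx0.ne'
  have h2 : ContDiffAt ℝ m (fun y : ℝ => (y + u) ^ (-β)) x := by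
    have hf : ContDiffAt ℝ m (fun y : ℝ => y + u) x :=
      (contDiff_id.add contDiff_const).contDiffAt
    exact hf.rpow_const_of_ne hxu.ne'
  exact (h1.mul h2).contDiffWithinAt

lemma taylor_est (α β u : ℝ) (hu : 0 < u) {d : ℕ} (hd : 1 ≤ d) {c z y : ℝ}
    (hc : 0 < c) (hy : y ∈ Icc c z) :
    ∃ ξ ∈ Icc c z, y ^ α * (y + u) ^ (-β)
      = (∑ k ∈ Finset.range d, (k ! : ℝ)⁻¹ * (y - c) ^ k * Fd α β u k c)
        + Fd α β u d ξ * (y - c) ^ d / d ! := by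
  have hcz : c ≤ z := le_trans hy.1 hy.2
  rcases eq_or_lt_of_le hy.1 with he | hlt
  · refine ⟨c, ⟨le_refl c, hcz⟩, ?_⟩
    rw [← he]
    have hsum : (∑ k ∈ Finset.range d, (k ! : ℝ)⁻¹ * (c - c) ^ k * Fd α β u k c)
        = Fd α β u 0 c := by
      rw [Finset.sum_eq_single 0]
      · simp
      · intro k _ hk
        rcases Nat.exists_eq_succ_of_ne_zero hk with ⟨e, rfl⟩
        simp [sub_self, zero_pow]
      · intro h; exact absurd (Finset.mem_range.mpr (by omega)) h
    rw [hsum, Fd_zero, sub_self, zero_pow (by omega : d ≠ 0), mul_zero, zero_div, add_zero]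
  · cases d with
    | zero => omega
    | succ d' =>
      have hf : ContDiffOn ℝ d' (fun x : ℝ => x ^ α * (x + u) ^ (-β)) (Icc c y) :=
        contDiffOn_f α β u hu d' hc
      have hIter := iter_eq α β u hu (a := c) (b := y) hc hlt
      have hf' : DifferentiableOn ℝ
          (iteratedDerivWithin d' (fun x : ℝ => x ^ α * (x + u) ^ (-β)) (Icc c y))
          (Ioo c y) := by
        intro x hx
        have hx0 : 0 < x := hc.trans hx.1
        exact ((hasDerivAt_Fd α β u hu d' hx0).differentiableAt.differentiableWithinAt).congr
          (fun w hw => hIter d' w (Ioo_subset_Icc_self hw))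
          (hIter d' x (Ioo_subset_Icc_self hx))
      obtain ⟨ξ, hξ, hTay⟩ := taylor_mean_remainder_lagrange hlt.ne (by rwa [uIcc_of_le hlt.le])
        (by rwa [uIcc_of_le hlt.le, uIoo_of_le hlt.le])
      rw [uIoo_of_le hlt.le] at hξ
      rw [uIcc_of_le hlt.le] at hTay
      refine ⟨ξ, ⟨hξ.1.le, hξ.2.le.trans hy.2⟩, ?_⟩
      have hT : taylorWithinEval (fun x : ℝ => x ^ α * (x + u) ^ (-β)) d' (Icc c y) c y
          = ∑ k ∈ Finset.range (d' + 1), (k ! : ℝ)⁻¹ * (y - c) ^ k * Fd α β u k c := by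
        rw [taylor_within_apply]
        refine Finset.sum_congr rfl fun k hk => ?_
        rw [hIter k c ⟨le_refl c, hlt.le⟩, smul_eq_mul]
      have hR : iteratedDerivWithin (d' + 1) (fun x : ℝ => x ^ α * (x + u) ^ (-β))
          (Icc c y) ξ = Fd α β u (d' + 1) ξ := hIter (d' + 1) ξ (Ioo_subset_Icc_self hξ)
      rw [hT, hR] at hTay
      have := hTay
      linarith [hTay]

lemma Fd_neg_of_eval_neg (α β u : ℝ) (d : ℕ) {c : ℝ} (hc : 0 < c) (hu : 0 < u)
    (h : (Pp α β u d).eval c < 0) : Fd α β u d c < 0 :=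
  mul_neg_of_pos_of_neg
    (mul_pos (Real.rpow_pos_of_pos hc _) (Real.rpow_pos_of_pos (by linarith) _)) h

lemma exists_c_near_zero (α β u : ℝ) (hu : 0 < u) {d : ℕ}
    (hfall : fall α d < 0) : ∃ c : ℝ, 0 < c ∧ Fd α β u d c < 0 := by
  have E0 : (Pp α β u d).eval 0 < 0 := by
    rw [Pp_eval_zero]
    exact mul_neg_of_pos_of_neg (pow_pos hu d) hfall
  have hev : ∀ᶠ x in 𝓝 (0 : ℝ), (Pp α β u d).eval x < 0 :=
    ((Pp α β u d).continuous.tendsto 0).eventually (gt_mem_nhds E0)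
  obtain ⟨c, hcneg, hcpos⟩ :=
    ((hev.filter_mono nhdsWithin_le_nhds).and
      (self_mem_nhdsWithin : Ioi (0:ℝ) ∈ 𝓝[>] (0:ℝ))).exists
  exact ⟨c, hcpos, Fd_neg_of_eval_neg α β u d hcpos hu hcneg⟩

lemma exists_c_near_top (α β u : ℝ) (hu : 0 < u) {d : ℕ} (hd : 1 ≤ d)
    (hfall : fall (α - β) d < 0) : ∃ c : ℝ, 0 < c ∧ Fd α β u d c < 0 := by
  have hco : (Pp α β u d).coeff d = fall (α - β) d := Pp_coeff α β u d
  have hco_ne : (Pp α β u d).coeff d ≠ 0 := by rw [hco]; exact ne_of_lt hfall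
  have hNat : (Pp α β u d).natDegree = d :=
    le_antisymm (Pp_natDegree_le α β u d) (le_natDegree_of_ne_zero hco_ne)
  have hp0 : Pp α β u d ≠ 0 := fun h => hco_ne (by rw [h, coeff_zero])
  have hlead : (Pp α β u d).leadingCoeff < 0 := by
    rw [leadingCoeff, hNat, hco]; exact hfall
  have hdeg : 0 < (Pp α β u d).degree :=
    natDegree_pos_iff_degree_pos.mp (by omega)
  have htend : Tendsto (fun x => (Pp α β u d).eval x) atTop atBot :=
    (Pp α β u d).tendsto_atBot_of_leadingCoeff_nonpos hdeg hlead.le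
  obtain ⟨c, hcneg, hcpos⟩ :=
    ((htend.eventually (eventually_lt_atBot (0:ℝ))).and (eventually_gt_atTop (0:ℝ))).exists
  exact ⟨c, hcpos, Fd_neg_of_eval_neg α β u d hcpos hu hcneg⟩

lemma exists_neg_Fd (n : ℕ) (hn : 2 ≤ n) (u : ℝ) (hu : 0 < u) (β α : ℝ)
    (hα0 : 0 ≤ α) (hαlt : α < (n : ℝ) - 2 + max β 0)
    (hne : ∀ m : ℕ, (m : ℝ) ≤ (n : ℝ) - 3 → α ≠ m + max β 0) :
    ∃ d : ℕ, 1 ≤ d ∧ d < n ∧ ∃ c : ℝ, 0 < c ∧ Fd α β u d c < 0 := by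
  rcases le_or_gt β 0 with hβ | hβ
  · rw [max_eq_right hβ] at hαlt hne
    have hlt : α < (n : ℝ) - 2 := by linarith
    set m : ℕ := (⌊α⌋).toNat with hm
    have hfl : (⌊α⌋ : ℝ) ≤ α := Int.floor_le α
    have hfl0 : 0 ≤ ⌊α⌋ := Int.floor_nonneg.mpr hα0
    have hmcast : (m : ℝ) = (⌊α⌋ : ℝ) := by
      rw [hm]; exact_mod_cast congrArg (fun z : ℤ => (z : ℝ)) (Int.toNat_of_nonneg hfl0)
    have hm1 : (m : ℝ) ≤ α := hmcast ▸ hfl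
    have hm2 : α < (m : ℝ) + 1 := by
      rw [hmcast]; exact_mod_cast Int.lt_floor_add_one α
    have hmn : m + 2 < n := by
      have : (m : ℝ) < (n : ℝ) - 2 := lt_of_le_of_lt hm1 hlt
      have : (m : ℝ) + 2 < (n : ℝ) := by linarith
      exact_mod_cast this
    have hm1' : (m : ℝ) < α := by
      rcases lt_or_eq_of_le hm1 with h | h
      · exact h
      · exfalso
        refine hne m ?_ (by rw [← h, add_zero])
        have : (m : ℝ) + 3 ≤ (n : ℝ) := by exact_mod_cast hmn
        linarith
    exact ⟨m + 2, by omega, hmn,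
      exists_c_near_zero α β u hu (fall_neg hm1' hm2)⟩
  · rw [max_eq_left hβ.le] at hαlt hne
    have hδlt : α - β < (n : ℝ) - 2 := by linarith
    rcases lt_or_ge (α - β) 0 with hδ | hδ
    · refine ⟨1, le_refl 1, by omega, exists_c_near_top α β u hu (le_refl 1) ?_⟩
      simpa [fall] using hδ
    · set δ := α - β with hδdef
      set m : ℕ := (⌊δ⌋).toNat with hm
      have hfl : (⌊δ⌋ : ℝ) ≤ δ := Int.floor_le δ
      have hfl0 : 0 ≤ ⌊δ⌋ := Int.floor_nonneg.mpr hδ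
      have hmcast : (m : ℝ) = (⌊δ⌋ : ℝ) := by
        rw [hm]; exact_mod_cast congrArg (fun z : ℤ => (z : ℝ)) (Int.toNat_of_nonneg hfl0)
      have hm1 : (m : ℝ) ≤ δ := hmcast ▸ hfl
      have hm2 : δ < (m : ℝ) + 1 := by
        rw [hmcast]; exact_mod_cast Int.lt_floor_add_one δ
      have hmn : m + 2 < n := by
        have h1 : (m : ℝ) < (n : ℝ) - 2 := lt_of_le_of_lt hm1 hδlt
        have : (m : ℝ) + 2 < (n : ℝ) := by linarith
        exact_mod_cast this
      have hm1' : (m : ℝ) < δ := by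
        rcases lt_or_eq_of_le hm1 with h | h
        · exact h
        · exfalso
          refine hne m ?_ (by rw [hδdef] at h; linarith)
          have : (m : ℝ) + 3 ≤ (n : ℝ) := by exact_mod_cast hmn
          linarith
      exact ⟨m + 2, by omega, hmn,
        exists_c_near_top α β u hu (by omega) (fall_neg hm1' hm2)⟩

def pathM (n : ℕ) : Matrix (Fin n) (Fin n) ℝ :=
  Matrix.of fun i j =>
    if i = j then 2 else if (i : ℕ) + 1 = (j : ℕ) ∨ (j : ℕ) + 1 = (i : ℕ) then 1 else 0

lemma pathM_nonneg (n : ℕ) (i j : Fin n) : 0 ≤ pathM n i j := by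
  unfold pathM
  simp only [of_apply]
  split_ifs <;> norm_num

lemma pathM_isHermitian (n : ℕ) : (pathM n).IsHermitian := by
  refine Matrix.ext fun i j => ?_
  rw [conjTranspose_apply, star_trivial]
  unfold pathM
  simp only [of_apply]
  rcases eq_or_ne i j with rfl | hij
  · rfl
  · rw [if_neg (Ne.symm hij), if_neg hij]
    have : ((j : ℕ) + 1 = (i : ℕ) ∨ (i : ℕ) + 1 = (j : ℕ)) ↔
        ((i : ℕ) + 1 = (j : ℕ) ∨ (j : ℕ) + 1 = (i : ℕ)) := or_comm
    rw [if_congr this rfl rfl]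

def shiftB (n : ℕ) : Matrix (Fin n) (Fin n) ℝ :=
  Matrix.of fun k i => (if k = i then 1 else 0) + (if (k : ℕ) + 1 = (i : ℕ) then 1 else 0)

def cornerE (n : ℕ) : Matrix (Fin n) (Fin n) ℝ :=
  Matrix.of fun k i => if (k : ℕ) = 0 ∧ (i : ℕ) = 0 then 1 else 0

lemma sum_indicator_eq (n : ℕ) (i : Fin n) (P : Fin n → ℝ) :
    ∑ k : Fin n, (if k = i then (1:ℝ) else 0) * P k = P i := by
  rw [Finset.sum_congr rfl (fun k _ => by rw [ite_mul, one_mul, zero_mul])]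
  rw [Finset.sum_ite_eq' Finset.univ i P, if_pos (Finset.mem_univ i)]

lemma pathM_eq_factor (n : ℕ) (hn : 2 ≤ n) :
    pathM n = (shiftB n)ᴴ * shiftB n + (cornerE n)ᴴ * cornerE n := by
  refine Matrix.ext fun i j => ?_
  have hBB : ((shiftB n)ᴴ * shiftB n) i j = ∑ k : Fin n, shiftB n k i * shiftB n k j := by
    rw [mul_apply]
    exact Finset.sum_congr rfl fun k _ => by rw [conjTranspose_apply, star_trivial]
  have hEE : ((cornerE n)ᴴ * cornerE n) i j = ∑ k : Fin n, cornerE n k i * cornerE n k j := by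
    rw [mul_apply]
    exact Finset.sum_congr rfl fun k _ => by rw [conjTranspose_apply, star_trivial]
  have expand : ∀ k : Fin n, shiftB n k i * shiftB n k j
      = (if k = i then (1:ℝ) else 0) * (if k = j then (1:ℝ) else 0)
        + (if k = i then (1:ℝ) else 0) * (if (k:ℕ)+1 = (j:ℕ) then (1:ℝ) else 0)
        + (if k = j then (1:ℝ) else 0) * (if (k:ℕ)+1 = (i:ℕ) then (1:ℝ) else 0)
        + (if (k:ℕ)+1 = (i:ℕ) then (1:ℝ) else 0) * (if (k:ℕ)+1 = (j:ℕ) then (1:ℝ) else 0) := by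
    intro k; unfold shiftB; simp only [of_apply]; ring
  have hT1 : ∑ k : Fin n, (if k = i then (1:ℝ) else 0) * (if k = j then (1:ℝ) else 0)
      = if i = j then (1:ℝ) else 0 := sum_indicator_eq n i _
  have hT2 : ∑ k : Fin n, (if k = i then (1:ℝ) else 0) * (if (k:ℕ)+1 = (j:ℕ) then (1:ℝ) else 0)
      = if (i:ℕ)+1 = (j:ℕ) then (1:ℝ) else 0 := sum_indicator_eq n i _
  have hT3 : ∑ k : Fin n, (if k = j then (1:ℝ) else 0) * (if (k:ℕ)+1 = (i:ℕ) then (1:ℝ) else 0)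
      = if (j:ℕ)+1 = (i:ℕ) then (1:ℝ) else 0 := sum_indicator_eq n j _
  have hT4 : ∑ k : Fin n,
      (if (k:ℕ)+1 = (i:ℕ) then (1:ℝ) else 0) * (if (k:ℕ)+1 = (j:ℕ) then (1:ℝ) else 0)
      = if i = j ∧ (i:ℕ) ≠ 0 then (1:ℝ) else 0 := by
    by_cases hij : i = j
    · subst hij
      by_cases hi : (i : ℕ) = 0
      · rw [if_neg (by simp [hi])]
        refine Finset.sum_eq_zero fun k _ => ?_
        rw [if_neg (by omega), zero_mul]
      · rw [if_pos ⟨rfl, hi⟩]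
        have hlt : (i : ℕ) - 1 < n := by have := i.isLt; omega
        rw [Finset.sum_eq_single (⟨(i:ℕ) - 1, hlt⟩ : Fin n)]
        · have hc : ((⟨(i:ℕ) - 1, hlt⟩ : Fin n) : ℕ) + 1 = (i:ℕ) := by
            simp only [Fin.val_mk]; omega
          rw [if_pos hc]; norm_num
        · intro m _ hm
          have : (m : ℕ) + 1 ≠ (i : ℕ) := by
            intro h
            exact hm (Fin.ext (by simp only [Fin.val_mk]; omega))
          rw [if_neg this, zero_mul]
        · intro h; exact absurd (Finset.mem_univ _) h
    · rw [if_neg (by simp [hij])]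
      refine Finset.sum_eq_zero fun k _ => ?_
      by_cases h1 : (k:ℕ)+1 = (i:ℕ)
      · have : (k:ℕ)+1 ≠ (j:ℕ) := fun h2 => hij (Fin.ext (by omega))
        rw [if_neg this, mul_zero]
      · rw [if_neg h1, zero_mul]
  have hE : ∑ k : Fin n, cornerE n k i * cornerE n k j
      = if (i:ℕ) = 0 ∧ (j:ℕ) = 0 then (1:ℝ) else 0 := by
    unfold cornerE
    simp only [of_apply]
    have h0 : (0 : ℕ) < n := by omega
    rw [Finset.sum_eq_single (⟨0, h0⟩ : Fin n)]
    · simp only [Fin.val_mk, true_and]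
      by_cases hi : (i:ℕ) = 0 <;> by_cases hj : (j:ℕ) = 0 <;> simp [hi, hj]
    · intro m _ hm
      have hmne : ¬ ((m : ℕ) = 0 ∧ (i : ℕ) = 0) := by
        intro h
        exact hm (Fin.ext (by simp only [Fin.val_mk]; omega))
      rw [if_neg hmne, zero_mul]
    · intro h; exact absurd (Finset.mem_univ _) h
  rw [Matrix.add_apply, hBB, hEE, Finset.sum_congr rfl (fun k _ => expand k)]
  simp only [Finset.sum_add_distrib]
  rw [hT1, hT2, hT3, hT4, hE]
  unfold pathM
  simp only [of_apply, Fin.ext_iff]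
  split_ifs <;> first | (norm_num; done) | (exfalso; omega)

lemma pathM_posSemidef (n : ℕ) (hn : 2 ≤ n) : (pathM n).PosSemidef := by
  rw [pathM_eq_factor n hn]
  exact (posSemidef_conjTranspose_mul_self _).add (posSemidef_conjTranspose_mul_self _)

lemma pathM_pow_band (n : ℕ) : ∀ (k : ℕ) (i j : Fin n),
    ((i:ℕ) + k < (j:ℕ) → ((pathM n) ^ k) i j = 0) ∧
    ((j:ℕ) = (i:ℕ) + k → ((pathM n) ^ k) i j = 1) := by
  intro k
  induction k with
  | zero =>
    intro i j
    constructor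
    · intro h
      rw [pow_zero, one_apply, if_neg (fun hij => by subst hij; omega)]
    · intro h
      rw [pow_zero]
      have : i = j := Fin.ext (by omega)
      rw [this, one_apply_eq]
  | succ k ih =>
    intro i j
    have hCzero : ∀ m : Fin n, (m:ℕ) < (j:ℕ) → (m:ℕ)+1 < (j:ℕ) → pathM n m j = 0 := by
      intro m h1 h2
      unfold pathM
      simp only [of_apply]
      rw [if_neg (fun h => by subst h; omega), if_neg (by omega)]
    constructor
    · intro h
      rw [pow_succ, mul_apply]
      refine Finset.sum_eq_zero fun m _ => ?_
      rcases le_or_gt (m:ℕ) ((i:ℕ)+k) with hm | hm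
      · rw [hCzero m (by omega) (by omega), mul_zero]
      · rw [(ih i m).1 hm, zero_mul]
    · intro h
      have hm0lt : (i:ℕ) + k < n := by have := j.isLt; omega
      rw [pow_succ, mul_apply, Finset.sum_eq_single (⟨(i:ℕ) + k, hm0lt⟩ : Fin n)]
      · have h1 : ((pathM n) ^ k) i ⟨(i:ℕ) + k, hm0lt⟩ = 1 :=
          (ih i ⟨(i:ℕ) + k, hm0lt⟩).2 rfl
        have h2 : pathM n ⟨(i:ℕ) + k, hm0lt⟩ j = 1 := by
          unfold pathM
          simp only [of_apply]
          rw [if_neg (fun hh => by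
              have := congrArg (fun z : Fin n => (z : ℕ)) hh
              simp only [Fin.val_mk] at this
              omega),
            if_pos (Or.inl (by omega))]
        rw [h1, h2, mul_one]
      · intro m _ hm
        rcases le_or_gt (m:ℕ) ((i:ℕ)+k) with hle | hlt
        · have hne : (m:ℕ) ≠ (i:ℕ)+k := fun hh => hm (Fin.ext (by simp only [Fin.val_mk]; omega))
          rw [hCzero m (by omega) (by omega), mul_zero]
        · rw [(ih i m).1 hlt, zero_mul]
      · intro h; exact absurd (Finset.mem_univ _) h

lemma pathM_symm (n : ℕ) (i j : Fin n) : pathM n j i = pathM n i j := by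
  unfold pathM
  simp only [Matrix.of_apply]
  rcases eq_or_ne i j with rfl | hij
  · rfl
  · rw [if_neg (Ne.symm hij), if_neg hij]
    have h : ((j : ℕ) + 1 = (i : ℕ) ∨ (i : ℕ) + 1 = (j : ℕ)) ↔
        ((i : ℕ) + 1 = (j : ℕ) ∨ (j : ℕ) + 1 = (i : ℕ)) := or_comm
    rw [if_congr h rfl rfl]

lemma matFun_of_isHermitian {n : ℕ} (f : ℝ → ℝ) (A : Matrix (Fin n) (Fin n) ℝ)
    (hA : A.IsHermitian) :
    matFun f A = (hA.eigenvectorUnitary : Matrix (Fin n) (Fin n) ℝ) *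
      Matrix.diagonal (fun i => f (hA.eigenvalues i)) *
      (hA.eigenvectorUnitary : Matrix (Fin n) (Fin n) ℝ)ᴴ := dif_pos hA

lemma abs_mul_le_half (a b : ℝ) : |a * b| ≤ (a ^ 2 + b ^ 2) / 2 := by
  rw [abs_mul]
  nlinarith [sq_nonneg (|a| - |b|), sq_abs a, sq_abs b, abs_nonneg a, abs_nonneg b]

set_option maxHeartbeats 1600000 in
theorem stmt_4 (n : ℕ) (hn : 2 ≤ n) (u : ℝ) (hu : 0 < u) (β α : ℝ)
    (hα0 : 0 ≤ α) (hαlt : α < (n : ℝ) - 2 + max β 0)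
    (hne : ∀ m : ℕ, (m : ℝ) ≤ (n : ℝ) - 3 → α ≠ m + max β 0) :
    ∃ A : Matrix (Fin n) (Fin n) ℝ,
      DN A ∧ ¬ DN (matFun (fun x => x ^ α * (x + u) ^ (-β)) A) := by
  haveI : NeZero n := ⟨by omega⟩
  obtain ⟨d, hd1, hdn, c, hc, hFneg⟩ := exists_neg_Fd n hn u hu β α hα0 hαlt hne
  -- continuity of Fd at c, choice of radius r
  have hcont : ContinuousAt (Fd α β u d) c :=
    (hasDerivAt_Fd α β u hu d hc).continuousAt
  have h2npow : (0:ℝ) < (2 * n) ^ d := by positivity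
  set η : ℝ := -Fd α β u d c / (2 * (2 * n) ^ d) with hηdef
  have hηpos : 0 < η := by
    apply div_pos (by linarith) (by positivity)
  obtain ⟨r, hr, hball⟩ := Metric.continuousAt_iff.mp hcont η hηpos
  set ε : ℝ := r / (4 * n + 2) with hεdef
  have hεpos : 0 < ε := by
    apply div_pos hr (by positivity)
  have hεr : ε * (2 * n) < r := by
    rw [hεdef, div_mul_eq_mul_div, div_lt_iff₀ (by positivity : (0:ℝ) < 4 * n + 2)]
    nlinarith [hr]
  set z : ℝ := c + ε * (2 * n) with hzdef
  -- the matrix A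
  set C : Matrix (Fin n) (Fin n) ℝ := pathM n with hCdef
  set A : Matrix (Fin n) (Fin n) ℝ := c • (1 : Matrix (Fin n) (Fin n) ℝ) + ε • C with hAdef
  have hc1 : (c • (1 : Matrix (Fin n) (Fin n) ℝ)) = Matrix.diagonal (fun _ => c) := by
    refine Matrix.ext fun i j => ?_
    rw [Matrix.smul_apply, one_apply, diagonal_apply]
    split_ifs <;> simp
  have hCpsd : C.PosSemidef := pathM_posSemidef n hn
  have hεCpsd : (ε • C).PosSemidef := by
    refine posSemidef_iff_dotProduct_mulVec.mpr ⟨?_, ?_⟩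
    · refine Matrix.ext fun i j => ?_
      rw [conjTranspose_apply, Matrix.smul_apply, Matrix.smul_apply, star_trivial]
      rw [hCdef, pathM_symm]
    · intro x
      rw [smul_mulVec, dotProduct_smul, smul_eq_mul]
      exact mul_nonneg hεpos.le ((posSemidef_iff_dotProduct_mulVec.mp hCpsd).2 x)
  have hApsd : A.PosSemidef := by
    rw [hAdef, hc1]
    exact (PosSemidef.diagonal (by intro i; exact hc.le)).add hεCpsd
  have hAH : A.IsHermitian := hApsd.1
  have hDNA : DN A := by
    refine ⟨hApsd, fun i j => ?_⟩
    rw [hAdef, Matrix.add_apply, hc1, diagonal_apply, Matrix.smul_apply, smul_eq_mul]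
    have := pathM_nonneg n i j
    split_ifs <;> [positivity; positivity]
  refine ⟨A, hDNA, ?_⟩
  -- spectral data
  set U : Matrix (Fin n) (Fin n) ℝ := (hAH.eigenvectorUnitary : Matrix (Fin n) (Fin n) ℝ)
    with hUdef
  set lam : Fin n → ℝ := hAH.eigenvalues with hlamdef
  have hspec : A = U * Matrix.diagonal lam * star U := by
    have := hAH.spectral_theorem
    rwa [RCLike.ofReal_real_eq_id, Function.id_comp] at this
  have hU1 : U * star U = 1 := mem_unitaryGroup_iff.mp hAH.eigenvectorUnitary.2
  have hU1' : star U * U = 1 := mem_unitaryGroup_iff'.mp hAH.eigenvectorUnitary.2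
  -- eigenvalue lower bound
  have hlam_lb : ∀ s, c ≤ lam s := by
    intro s
    set v : Fin n → ℝ := ⇑(hAH.eigenvectorBasis s) with hvdef
    have hvv : v ⬝ᵥ v = 1 := by
      have hnorm : ‖hAH.eigenvectorBasis s‖ = 1 := hAH.eigenvectorBasis.orthonormal.1 s
      have : ‖hAH.eigenvectorBasis s‖ = Real.sqrt (∑ i, ‖v i‖ ^ 2) :=
        EuclideanSpace.norm_eq _
      rw [hnorm] at this
      have hsq : (∑ i, ‖v i‖ ^ 2) = 1 := by
        have h0 : 0 ≤ ∑ i, ‖v i‖ ^ 2 := Finset.sum_nonneg fun i _ => sq_nonneg _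
        nlinarith [Real.sq_sqrt h0, this]
      rw [dotProduct]
      rw [← hsq]
      refine Finset.sum_congr rfl fun i _ => ?_
      rw [Real.norm_eq_abs, sq_abs, pow_two]
    have hmv : A *ᵥ v = lam s • v := hAH.mulVec_eigenvectorBasis s
    have hform := (posSemidef_iff_dotProduct_mulVec.mp hεCpsd).2 v
    have hstarv : star v = v := by
      funext i; exact star_trivial _
    have hεCv : (ε • C) *ᵥ v = lam s • v - c • v := by
      have : A *ᵥ v = (c • (1 : Matrix (Fin n) (Fin n) ℝ)) *ᵥ v + (ε • C) *ᵥ v := by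
        rw [hAdef, add_mulVec]
      rw [hmv] at this
      rw [smul_mulVec, one_mulVec] at this
      rw [this]
      abel
    rw [hstarv, hεCv] at hform
    have : v ⬝ᵥ (lam s • v - c • v) = lam s - c := by
      rw [dotProduct_sub, dotProduct_smul, dotProduct_smul, hvv, smul_eq_mul,
        smul_eq_mul, mul_one, mul_one]
    rw [this] at hform
    linarith
  -- trace and eigenvalue upper bound
  have htr : ∑ s, lam s = n * c + ε * (2 * n) := by
    have h1 : trace A = ∑ s, lam s := by
      rw [hspec, trace_mul_comm, ← Matrix.mul_assoc, hU1', Matrix.one_mul, trace_diagonal]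
    have h2 : trace A = n * c + ε * (2 * n) := by
      rw [hAdef, trace_add, trace_smul, trace_smul, trace_one]
      have htrC : trace C = 2 * n := by
        rw [trace]
        have : ∀ i : Fin n, diag C i = 2 := by
          intro i
          show pathM n i i = 2
          simp [pathM]
        rw [Finset.sum_congr rfl fun i _ => this i, Finset.sum_const, Finset.card_univ,
          Fintype.card_fin, nsmul_eq_mul]
        ring
      rw [htrC]
      simp only [smul_eq_mul, Fintype.card_fin]
      ring
    rw [← h1, h2]
  have hlam_ub : ∀ s, lam s ≤ c + ε * (2 * n) := by
    intro s
    have herase : ∑ t ∈ Finset.univ.erase s, lam t + lam s = ∑ t, lam t :=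
      Finset.sum_erase_add _ _ (Finset.mem_univ s)
    have hcard : (Finset.univ.erase s).card = n - 1 := by
      rw [Finset.card_erase_of_mem (Finset.mem_univ s), Finset.card_univ, Fintype.card_fin]
    have hbound : ((n - 1 : ℕ) : ℝ) * c ≤ ∑ t ∈ Finset.univ.erase s, lam t := by
      calc ((n - 1 : ℕ) : ℝ) * c = ∑ _t ∈ Finset.univ.erase s, c := by
            rw [Finset.sum_const, hcard, nsmul_eq_mul]
        _ ≤ ∑ t ∈ Finset.univ.erase s, lam t :=
            Finset.sum_le_sum fun t _ => hlam_lb t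
    have hn1 : ((n - 1 : ℕ) : ℝ) = (n : ℝ) - 1 := by
      rw [Nat.cast_sub (by omega)]; norm_num
    rw [hn1] at hbound
    rw [htr] at herase
    nlinarith [hc]
  -- nu and its properties
  set ν : Fin n → ℝ := fun s => (lam s - c) / ε with hνdef
  have hν0 : ∀ s, 0 ≤ ν s := fun s => div_nonneg (by linarith [hlam_lb s]) hεpos.le
  have hν2n : ∀ s, ν s ≤ 2 * n := by
    intro s
    simp only [hνdef]
    rw [div_le_iff₀ hεpos]
    have := hlam_ub s
    nlinarith
  have hlam_eq : ∀ s, lam s = c + ε * ν s := by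
    intro s
    simp only [hνdef]
    field_simp
    ring
  -- C diagonalized by U
  have hUc1U : U * (c • (1 : Matrix (Fin n) (Fin n) ℝ)) * star U
      = c • (1 : Matrix (Fin n) (Fin n) ℝ) := by
    rw [Matrix.mul_smul, Matrix.mul_one, Matrix.smul_mul, hU1]
  have hdiagν : Matrix.diagonal ν
      = ε⁻¹ • (Matrix.diagonal lam - c • (1 : Matrix (Fin n) (Fin n) ℝ)) := by
    rw [hc1]
    refine Matrix.ext fun i j => ?_
    rcases eq_or_ne i j with rfl | hij
    · simp only [Matrix.diagonal_apply_eq, Matrix.smul_apply, Matrix.sub_apply, smul_eq_mul]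
      simp only [hνdef]
      rw [div_eq_inv_mul]
    · simp [Matrix.diagonal_apply_ne _ hij, hij]
  have hfactor : U * (ε⁻¹ • (Matrix.diagonal lam - c • (1 : Matrix (Fin n) (Fin n) ℝ))) * star U
      = ε⁻¹ • (U * Matrix.diagonal lam * star U
          - U * (c • (1 : Matrix (Fin n) (Fin n) ℝ)) * star U) := by
    rw [Matrix.mul_smul, Matrix.smul_mul, Matrix.mul_sub, Matrix.sub_mul]
  have hCdiag : C = U * Matrix.diagonal ν * star U := by
    calc C = ε⁻¹ • (ε • C) := by
            rw [smul_smul, inv_mul_cancel₀ hεpos.ne', one_smul]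
      _ = ε⁻¹ • (A - c • (1 : Matrix (Fin n) (Fin n) ℝ)) := by
            rw [hAdef, add_sub_cancel_left]
      _ = U * (ε⁻¹ • (Matrix.diagonal lam - c • (1 : Matrix (Fin n) (Fin n) ℝ))) * star U := by
            rw [hfactor, ← hspec, hUc1U]
      _ = U * Matrix.diagonal ν * star U := by rw [← hdiagν]
  -- powers of C
  have hconj : ∀ P Q : Matrix (Fin n) (Fin n) ℝ,
      (U * P * star U) * (U * Q * star U) = U * (P * Q) * star U := by
    intro P Q
    calc (U * P * star U) * (U * Q * star U)
        = U * (P * ((star U * U) * (Q * star U))) := by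
          simp only [Matrix.mul_assoc]
      _ = U * (P * Q) * star U := by
          rw [hU1', Matrix.one_mul]
          simp only [Matrix.mul_assoc]
  have hCpow : ∀ k : ℕ, C ^ k = U * Matrix.diagonal (fun s => ν s ^ k) * star U := by
    intro k
    induction k with
    | zero =>
      have h0 : (fun s : Fin n => ν s ^ 0) = fun _ => (1:ℝ) := by
        funext s; rw [pow_zero]
      rw [pow_zero, h0, diagonal_one, Matrix.mul_one]
      exact hU1.symm
    | succ k ih =>
      rw [pow_succ, ih, hCdiag, hconj, diagonal_mul_diagonal]
      have hfun : (fun i => ν i ^ k * ν i) = fun s => ν s ^ (k + 1) := by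
        funext s; rw [pow_succ]
      rw [hfun]
  -- entries of U * diagonal w * star U
  have entry : ∀ (w : Fin n → ℝ) (i j : Fin n),
      (U * Matrix.diagonal w * star U) i j = ∑ s, U i s * w s * U j s := by
    intro w i j
    rw [Matrix.mul_apply]
    refine Finset.sum_congr rfl fun s _ => ?_
    rw [Matrix.mul_diagonal, Matrix.star_apply, star_trivial]
  set jd : Fin n := ⟨d, hdn⟩ with hjddef
  set w : Fin n → ℝ := fun s => U 0 s * U jd s with hwdef
  have hSν : ∀ k : ℕ, ∑ s, ν s ^ k * w s = (C ^ k) 0 jd := by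
    intro k
    rw [hCpow k, entry]
    refine Finset.sum_congr rfl fun s _ => ?_
    rw [hwdef]
    ring
  have hband0 : ∀ k, k < d → (C ^ k) 0 jd = 0 := by
    intro k hk
    refine (pathM_pow_band n k 0 jd).1 ?_
    simp only [hjddef, Fin.val_zero]
    omega
  have hband1 : (C ^ d) 0 jd = 1 := by
    refine (pathM_pow_band n d 0 jd).2 ?_
    simp only [hjddef, Fin.val_zero]
    omega
  -- row square sums
  have rowsq : ∀ i : Fin n, ∑ s, U i s ^ 2 = 1 := by
    intro i
    have h := congrFun (congrFun hU1 i) i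
    rw [Matrix.mul_apply, Matrix.one_apply_eq] at h
    rw [← h]
    refine Finset.sum_congr rfl fun s _ => ?_
    rw [Matrix.star_apply, star_trivial, pow_two]
  have sumabsw : ∑ s, |w s| ≤ 1 := by
    calc ∑ s, |w s| ≤ ∑ s, (U 0 s ^ 2 + U jd s ^ 2) / 2 :=
          Finset.sum_le_sum fun s _ => abs_mul_le_half _ _
      _ = ((∑ s, U 0 s ^ 2) + ∑ s, U jd s ^ 2) / 2 := by
          rw [← Finset.sum_div, Finset.sum_add_distrib]
      _ = 1 := by rw [rowsq 0, rowsq jd]; norm_num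
  -- Taylor expansion at each eigenvalue
  have hmem : ∀ s, lam s ∈ Icc c z := by
    intro s
    exact ⟨hlam_lb s, by rw [hzdef]; exact hlam_ub s⟩
  have hts : ∀ s : Fin n, ∃ ξ ∈ Icc c z, (lam s) ^ α * (lam s + u) ^ (-β)
      = (∑ k ∈ Finset.range d, (k ! : ℝ)⁻¹ * (lam s - c) ^ k * Fd α β u k c)
        + Fd α β u d ξ * (lam s - c) ^ d / d ! :=
    fun s => taylor_est α β u hu hd1 hc (hmem s)
  choose ξ hξmem hξeq using hts
  -- bound on Fd at ξ
  have hξclose : ∀ s, |Fd α β u d (ξ s) - Fd α β u d c| ≤ η := by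
    intro s
    have h1 : dist (ξ s) c < r := by
      rw [Real.dist_eq]
      have h2 := (hξmem s).1
      have h3 := (hξmem s).2
      rw [hzdef] at h3
      rw [abs_of_nonneg (by linarith)]
      linarith [hεr]
    have := hball h1
    rw [Real.dist_eq] at this
    exact this.le
  -- the negative entry
  intro hDN
  have hnn := hDN.2 0 jd
  have hEntry : matFun (fun x => x ^ α * (x + u) ^ (-β)) A 0 jd
      = ∑ s, ((lam s) ^ α * (lam s + u) ^ (-β)) * w s := by
    rw [matFun_of_isHermitian _ _ hAH]
    have hstar : (hAH.eigenvectorUnitary : Matrix (Fin n) (Fin n) ℝ)ᴴ = star U := rfl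
    rw [hstar]
    rw [entry (fun s => (lam s) ^ α * (lam s + u) ^ (-β)) 0 jd]
    refine Finset.sum_congr rfl fun s _ => ?_
    rw [hwdef]
    ring
  have hsplit : ∀ s : Fin n, ((lam s) ^ α * (lam s + u) ^ (-β)) * w s
      = (∑ k ∈ Finset.range d, ((k ! : ℝ)⁻¹ * Fd α β u k c * ε ^ k) * (ν s ^ k * w s))
        + ((d ! : ℝ)⁻¹ * ε ^ d) * (Fd α β u d (ξ s) * (ν s ^ d * w s)) := by
    intro s
    rw [hξeq s]
    have hlc : lam s - c = ε * ν s := by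
      rw [hlam_eq s]; ring
    rw [hlc, add_mul, Finset.sum_mul]
    congr 1
    · refine Finset.sum_congr rfl fun k _ => ?_
      rw [mul_pow]
      ring
    · rw [mul_pow, div_eq_mul_inv]
      ring
  have part1 : ∑ s, (∑ k ∈ Finset.range d,
      ((k ! : ℝ)⁻¹ * Fd α β u k c * ε ^ k) * (ν s ^ k * w s)) = 0 := by
    rw [Finset.sum_comm]
    refine Finset.sum_eq_zero fun k hk => ?_
    rw [← Finset.mul_sum, hSν k, hband0 k (Finset.mem_range.mp hk), mul_zero]
  set S : ℝ := ∑ s, Fd α β u d (ξ s) * (ν s ^ d * w s) with hSdef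
  have hSsplit : S = Fd α β u d c * (∑ s, ν s ^ d * w s)
      + ∑ s, (Fd α β u d (ξ s) - Fd α β u d c) * (ν s ^ d * w s) := by
    rw [hSdef, Finset.mul_sum, ← Finset.sum_add_distrib]
    refine Finset.sum_congr rfl fun s _ => ?_
    ring
  have herr : |∑ s, (Fd α β u d (ξ s) - Fd α β u d c) * (ν s ^ d * w s)|
      ≤ η * (2 * n) ^ d := by
    calc |∑ s, (Fd α β u d (ξ s) - Fd α β u d c) * (ν s ^ d * w s)|
        ≤ ∑ s, |(Fd α β u d (ξ s) - Fd α β u d c) * (ν s ^ d * w s)| :=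
          Finset.abs_sum_le_sum_abs _ _
      _ ≤ ∑ s, η * (2 * n) ^ d * |w s| := by
          refine Finset.sum_le_sum fun s _ => ?_
          rw [abs_mul, abs_mul, abs_of_nonneg (pow_nonneg (hν0 s) d)]
          have h1 : |Fd α β u d (ξ s) - Fd α β u d c| ≤ η := hξclose s
          have h2 : ν s ^ d ≤ (2 * n) ^ d := pow_le_pow_left₀ (hν0 s) (hν2n s) d
          have h3 : (0:ℝ) ≤ ν s ^ d := pow_nonneg (hν0 s) d
          have h4 : (0:ℝ) ≤ |w s| := abs_nonneg _
          calc |Fd α β u d (ξ s) - Fd α β u d c| * (ν s ^ d * |w s|)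
              ≤ η * ((2 * n) ^ d * |w s|) :=
                mul_le_mul h1 (mul_le_mul_of_nonneg_right h2 h4) (mul_nonneg h3 h4) hηpos.le
            _ = η * (2 * n) ^ d * |w s| := by ring
      _ = η * (2 * n) ^ d * ∑ s, |w s| := by rw [← Finset.mul_sum]
      _ ≤ η * (2 * n) ^ d * 1 := by
          refine mul_le_mul_of_nonneg_left sumabsw (by positivity)
      _ = η * (2 * n) ^ d := by ring
  have hη2n : η * (2 * n) ^ d = -Fd α β u d c / 2 := by
    rw [hηdef]
    field_simp
  have hSneg : S ≤ Fd α β u d c / 2 := by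
    rw [hSsplit, hSν d, hband1, mul_one]
    have := (abs_le.mp herr).2
    rw [hη2n] at this
    linarith
  have hEneg : matFun (fun x => x ^ α * (x + u) ^ (-β)) A 0 jd < 0 := by
    rw [hEntry, Finset.sum_congr rfl fun s _ => hsplit s, Finset.sum_add_distrib, part1,
      zero_add, ← Finset.mul_sum, ← hSdef]
    have hpos : (0:ℝ) < (d ! : ℝ)⁻¹ * ε ^ d := by positivity
    have : S < 0 := lt_of_le_of_lt hSneg (by linarith)
    exact mul_neg_of_pos_of_neg hpos this
  linarith

end Stmt4Aux
end

section
/- For all real numbers α, β, all u > 0, all x > 0, and every nonnegative integer r, the r-th derivative of the function x ↦ x^α (x + u)^{−β} is given by (d^r/dx^r)[x^α (x+u)^{−β}] = x^{α−r} (x+u)^{−(β+r)} · Σ_{i=0}^{r} C(r,i) u^i x^{r−i} (∏_{j=0}^{i−1} (α − j)) (∏_{j=i}^{r−1} (α − β − j)), where C(r,i) is the binomial coefficient and empty products equal 1. -/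
open Matrix Filter Set Topology

namespace Stmt5Aux

noncomputable def c (α β : ℝ) (r i : ℕ) : ℝ :=
  (r.choose i : ℝ) * (∏ j ∈ Finset.range i, (α - j)) * (∏ j ∈ Finset.Ico i r, (α - β - j))

lemma c_top (α β : ℝ) (r : ℕ) : c α β r (r+1) = 0 := by
  simp [c, Nat.choose_succ_self]

lemma c_zero_succ (α β : ℝ) (r : ℕ) : c α β (r+1) 0 = (α - β - r) * c α β r 0 := by
  simp only [c, Nat.choose_zero_right, Nat.cast_one, Finset.range_zero, Finset.prod_empty,
    ← Finset.range_eq_Ico]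
  rw [Finset.prod_range_succ]
  ring

lemma coeff_id (α β : ℝ) (r i : ℕ) (hi : i ≤ r) :
    (α - β - r - (i+1)) * c α β r (i+1) + (α - i) * c α β r i = c α β (r+1) (i+1) := by
  rcases eq_or_lt_of_le hi with h | h
  · subst h
    simp [c, c_top, Nat.choose_succ_self, Finset.prod_range_succ]
    ring
  · have h1 : (∏ j ∈ Finset.Ico i r, (α - β - (j:ℝ))) =
        (α - β - i) * ∏ j ∈ Finset.Ico (i+1) r, (α - β - (j:ℝ)) :=
      Finset.prod_eq_prod_Ico_succ_bot h _
    have h2 : (∏ j ∈ Finset.Ico (i+1) (r+1), (α - β - (j:ℝ))) =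
        (∏ j ∈ Finset.Ico (i+1) r, (α - β - (j:ℝ))) * (α - β - r) :=
      Finset.prod_Ico_succ_top (by omega) _
    have h3 : (∏ j ∈ Finset.range (i+1), (α - (j:ℝ))) =
        (∏ j ∈ Finset.range i, (α - (j:ℝ))) * (α - i) := Finset.prod_range_succ _ _
    have hch : ((r.choose (i+1) : ℝ)) * (i+1) = (r.choose i : ℝ) * ((r:ℝ) - i) := by
      have := Nat.choose_succ_right_eq r i
      have h' := congrArg (Nat.cast : ℕ → ℝ) this
      push_cast [Nat.cast_sub hi] at h'
      linarith [h']
    have h4 : ((r+1).choose (i+1) : ℝ) = (r.choose i : ℝ) + (r.choose (i+1) : ℝ) := by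
      rw [Nat.choose_succ_succ]; push_cast; ring
    simp only [c, h1, h2, h3, h4]
    linear_combination (-(α - i) * (∏ j ∈ Finset.range i, (α - (j:ℝ))) *
      (∏ j ∈ Finset.Ico (i+1) r, (α - β - (j:ℝ)))) * hch

lemma pow_aux (x : ℝ) (n : ℕ) : (n:ℝ) * x^(n-1) * x = (n:ℝ) * x^n := by
  cases n with
  | zero => simp
  | succ m => rw [Nat.add_sub_cancel]; push_cast; ring

lemma key (α β u x : ℝ) (r : ℕ) :
    x * (x + u) * (∑ i ∈ Finset.range (r+1),
        c α β r i * u^i * (((r - i : ℕ) : ℝ) * x^(r - i - 1)))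
      + ((α - r) * (x + u) - (β + r) * x) *
        (∑ i ∈ Finset.range (r+1), c α β r i * u^i * x^(r - i))
    = ∑ i ∈ Finset.range (r+2), c α β (r+1) i * u^i * x^(r + 1 - i) := by
  rw [Finset.mul_sum, Finset.mul_sum, ← Finset.sum_add_distrib]
  have step : ∀ i ∈ Finset.range (r+1),
      x * (x + u) * (c α β r i * u^i * (((r - i : ℕ) : ℝ) * x^(r - i - 1)))
        + ((α - r) * (x + u) - (β + r) * x) * (c α β r i * u^i * x^(r - i))
      = (α - β - r - i) * c α β r i * u^i * x^(r + 1 - i)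
        + (α - i) * c α β r i * u^(i+1) * x^(r - i) := by
    intro i hi
    have hile : i ≤ r := Nat.lt_succ_iff.mp (Finset.mem_range.mp hi)
    obtain ⟨n, hn⟩ : ∃ n, r = i + n := ⟨r - i, by omega⟩
    subst hn
    have e1 : i + n - i = n := by omega
    have e2 : i + n + 1 - i = n + 1 := by omega
    rw [e1, e2]
    have hp := pow_aux x n
    push_cast
    linear_combination ((x + u) * c α β (i + n) i * u ^ i) * hp
  rw [Finset.sum_congr rfl step, Finset.sum_add_distrib]
  rw [Finset.sum_range_succ' (fun i => c α β (r+1) i * u^i * x^(r + 1 - i)) (r+1)]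
  rw [Finset.sum_range_succ' (fun i => (α - β - r - (i:ℝ)) * c α β r i * u^i * x^(r + 1 - i)) r]
  have hext : (∑ k ∈ Finset.range r,
        (α - β - (r:ℝ) - ((k+1:ℕ):ℝ)) * c α β r (k+1) * u^(k+1) * x^(r + 1 - (k+1)))
      = ∑ k ∈ Finset.range (r+1),
        (α - β - (r:ℝ) - ((k+1:ℕ):ℝ)) * c α β r (k+1) * u^(k+1) * x^(r + 1 - (k+1)) := by
    rw [Finset.sum_range_succ, c_top]; ring
  rw [hext]
  have hsum : (∑ k ∈ Finset.range (r+1),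
        (α - β - (r:ℝ) - ((k+1:ℕ):ℝ)) * c α β r (k+1) * u^(k+1) * x^(r + 1 - (k+1)))
      + ∑ k ∈ Finset.range (r+1), (α - (k:ℝ)) * c α β r k * u^(k+1) * x^(r - k)
      = ∑ k ∈ Finset.range (r+1), c α β (r+1) (k+1) * u^(k+1) * x^(r + 1 - (k+1)) := by
    rw [← Finset.sum_add_distrib]
    refine Finset.sum_congr rfl fun k hk => ?_
    have hkle : k ≤ r := by simpa [Nat.lt_succ_iff] using hk
    have e3 : r + 1 - (k+1) = r - k := by omega
    rw [e3]
    have := coeff_id α β r k hkle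
    push_cast
    linear_combination (u^(k+1) * x^(r-k)) * this
  have hzero : (α - β - (r:ℝ) - ((0:ℕ):ℝ)) * c α β r 0 * u^0 * x^(r + 1 - 0)
      = c α β (r+1) 0 * u^0 * x^(r + 1 - 0) := by
    rw [c_zero_succ]; push_cast; ring
  push_cast at hsum hzero ⊢
  linarith [hsum, hzero]

end Stmt5Aux

namespace Stmt5Aux

lemma hasDeriv (α β u : ℝ) (hu : 0 < u) (r : ℕ) (x : ℝ) (hx : 0 < x) :
    HasDerivAt (fun y : ℝ => y ^ (α - r) * (y + u) ^ (-(β + r)) *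
        ∑ i ∈ Finset.range (r+1), c α β r i * u^i * y^(r-i))
      (x ^ (α - r - 1) * (x + u) ^ (-(β + r) - 1) *
        ∑ i ∈ Finset.range (r+2), c α β (r+1) i * u^i * x^(r+1-i)) x := by
  have hxu : 0 < x + u := by linarith
  have h1 : HasDerivAt (fun y : ℝ => y ^ (α - r)) ((α - r) * x ^ (α - r - 1)) x :=
    Real.hasDerivAt_rpow_const (Or.inl hx.ne')
  have h2 : HasDerivAt (fun y : ℝ => (y + u) ^ (-(β + r)))
      ((-(β + r)) * (x + u) ^ (-(β + r) - 1)) x := by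
    have := ((hasDerivAt_id x).add_const u).rpow_const (p := -(β + r)) (Or.inl hxu.ne')
    simpa using this
  have h3 : HasDerivAt (fun y : ℝ => ∑ i ∈ Finset.range (r+1), c α β r i * u^i * y^(r-i))
      (∑ i ∈ Finset.range (r+1), c α β r i * u^i * (((r - i : ℕ) : ℝ) * x^(r - i - 1))) x := by
    refine HasDerivAt.fun_sum fun i _ => ?_
    simpa [mul_assoc] using (hasDerivAt_pow (r - i) x).const_mul (c α β r i * u^i)
  have H : HasDerivAt (fun y : ℝ => y ^ (α - r) * (y + u) ^ (-(β + r)) *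
      ∑ i ∈ Finset.range (r+1), c α β r i * u^i * y^(r-i))
      (((α - r) * x ^ (α - r - 1) * (x + u) ^ (-(β + r)) +
          x ^ (α - r) * ((-(β + r)) * (x + u) ^ (-(β + r) - 1))) *
          ∑ i ∈ Finset.range (r+1), c α β r i * u^i * x^(r-i) +
        x ^ (α - r) * (x + u) ^ (-(β + r)) *
          ∑ i ∈ Finset.range (r+1), c α β r i * u^i * (((r - i : ℕ) : ℝ) * x^(r - i - 1))) x :=
    (h1.mul h2).mul h3
  convert H using 1
  rw [← key α β u x r]
  have hx1 : x ^ (α - r) = x ^ (α - r - 1) * x := by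
    nth_rewrite 1 [show α - (r:ℝ) = (α - r - 1) + 1 by ring]
    rw [Real.rpow_add_one hx.ne']
  have hx2 : (x + u) ^ (-(β + r)) = (x + u) ^ (-(β + r) - 1) * (x + u) := by
    nth_rewrite 1 [show -(β + (r:ℝ)) = (-(β + r) - 1) + 1 by ring]
    rw [Real.rpow_add_one hxu.ne']
  rw [hx1, hx2]
  ring

end Stmt5Aux


theorem stmt_5 (α β u : ℝ) (hu : 0 < u) (r : ℕ) (x : ℝ) (hx : 0 < x) :
    iteratedDeriv r (fun y : ℝ => y ^ α * (y + u) ^ (-β)) x =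
      x ^ (α - r) * (x + u) ^ (-(β + r)) *
        ∑ i ∈ Finset.range (r + 1),
          (r.choose i : ℝ) * u ^ i * x ^ (r - i) *
            (∏ j ∈ Finset.range i, (α - j)) *
            (∏ j ∈ Finset.Ico i r, (α - β - j)) := by
  have main : ∀ r : ℕ, ∀ x : ℝ, 0 < x →
      iteratedDeriv r (fun y : ℝ => y ^ α * (y + u) ^ (-β)) x =
        x ^ (α - r) * (x + u) ^ (-(β + r)) *
          ∑ i ∈ Finset.range (r+1), Stmt5Aux.c α β r i * u^i * x^(r-i) := by
    intro r
    induction r with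
    | zero =>
      intro x hx
      simp [iteratedDeriv_zero, Stmt5Aux.c]
    | succ r ih =>
      intro x hx
      rw [iteratedDeriv_succ]
      have hev : iteratedDeriv r (fun y : ℝ => y ^ α * (y + u) ^ (-β)) =ᶠ[nhds x]
          (fun y => y ^ (α - r) * (y + u) ^ (-(β + r)) *
            ∑ i ∈ Finset.range (r+1), Stmt5Aux.c α β r i * u^i * y^(r-i)) := by
        filter_upwards [Ioi_mem_nhds hx] with y hy using ih y hy
      rw [hev.deriv_eq, (Stmt5Aux.hasDeriv α β u hu r x hx).deriv]
      push_cast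
      ring_nf
  rw [main r x hx]
  congr 1
  refine Finset.sum_congr rfl fun i _ => ?_
  simp only [Stmt5Aux.c]
  ring
end

section
/- Let n ≥ 2 be an integer, let f : [0,∞) → [0,∞) be a function, and fix a pair of indices 1 ≤ i ≠ j ≤ n. Then f(A) is doubly nonnegative for every n×n doubly nonnegative matrix A if and only if the (i,j) entry of f(A) is nonnegative for every n×n doubly nonnegative matrix A. -/
open Matrix Filter Set Topology

lemma matFun_eq_cfc {n : ℕ} (f : ℝ → ℝ) (A : Matrix (Fin n) (Fin n) ℝ)
    (hA : A.IsHermitian) : matFun f A = cfc f A := by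
  rw [matFun, dif_pos hA, hA.cfc_eq f, Matrix.IsHermitian.cfc]
  rfl

lemma matFun_posSemidef {n : ℕ} (f : ℝ → ℝ) (hf0 : ∀ x : ℝ, 0 ≤ x → 0 ≤ f x)
    {A : Matrix (Fin n) (Fin n) ℝ} (hA : A.PosSemidef) : (matFun f A).PosSemidef := by
  rw [matFun, dif_pos hA.isHermitian]
  exact (Matrix.PosSemidef.diagonal fun i => hf0 _ (hA.eigenvalues_nonneg i)
    ).mul_mul_conjTranspose_same _

lemma matFun_submatrix {n : ℕ} (f : ℝ → ℝ) (A : Matrix (Fin n) (Fin n) ℝ)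
    (hA : A.IsHermitian) (σ : Equiv.Perm (Fin n)) :
    matFun f (A.submatrix σ σ) = (matFun f A).submatrix σ σ := by
  have hAsa : IsSelfAdjoint A := hA
  have hB : (A.submatrix σ σ).IsHermitian := hA.submatrix σ
  have hBsa : IsSelfAdjoint (A.submatrix σ σ) := hB
  set e : Matrix (Fin n) (Fin n) ℝ ≃ₐ[ℝ] Matrix (Fin n) (Fin n) ℝ :=
    Matrix.reindexAlgEquiv ℝ ℝ σ.symm with he
  have heA : e A = A.submatrix σ σ := by
    simp [he, Matrix.reindexAlgEquiv_apply, Matrix.reindex_apply]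
  have hspec : spectrum ℝ (A.submatrix σ σ) = spectrum ℝ A := by
    rw [← heA, AlgEquiv.spectrum_eq]
  classical
  set s : Finset ℝ := (Matrix.finite_real_spectrum (A := A)).toFinset with hs
  set p : Polynomial ℝ := Lagrange.interpolate s id f with hpdef
  have hp : ∀ x ∈ spectrum ℝ A, p.eval x = f x := by
    intro x hx
    have hxs : x ∈ s := by simp [hs, hx]
    have := Lagrange.eval_interpolate_at_node f (Set.injOn_id _) hxs
    rw [hpdef]; exact this
  calc matFun f (A.submatrix σ σ) = cfc f (A.submatrix σ σ) := matFun_eq_cfc f _ hB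
    _ = cfc p.eval (A.submatrix σ σ) := by
        refine cfc_congr fun x hx => ?_
        exact (hp x (hspec ▸ hx)).symm
    _ = Polynomial.aeval (A.submatrix σ σ) p := cfc_polynomial p _
    _ = e (Polynomial.aeval A p) := by
        rw [← heA, Polynomial.aeval_algHom_apply]
    _ = e (cfc p.eval A) := by rw [cfc_polynomial p A]
    _ = e (cfc f A) := by
        congr 1
        exact cfc_congr fun x hx => hp x hx
    _ = e (matFun f A) := by rw [matFun_eq_cfc f A hA]
    _ = (matFun f A).submatrix σ σ := by
        simp [he, Matrix.reindexAlgEquiv_apply, Matrix.reindex_apply]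

lemma posSemidef_diag {n : ℕ} {M : Matrix (Fin n) (Fin n) ℝ} (hM : M.PosSemidef)
    (k : Fin n) : 0 ≤ M k k := by
  exact hM.diag_nonneg

theorem stmt_8 (n : ℕ) (hn : 2 ≤ n) (f : ℝ → ℝ)
    (hf0 : ∀ x : ℝ, 0 ≤ x → 0 ≤ f x)
    (i j : Fin n) (hij : i ≠ j) :
    (∀ A : Matrix (Fin n) (Fin n) ℝ, DN A → DN (matFun f A)) ↔
      (∀ A : Matrix (Fin n) (Fin n) ℝ, DN A → 0 ≤ matFun f A i j) := by
  constructor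
  · intro h A hA
    exact (h A hA).2 i j
  · intro h A hA
    refine ⟨matFun_posSemidef f hf0 hA.1, fun k l => ?_⟩
    rcases eq_or_ne k l with rfl | hkl
    · exact posSemidef_diag (matFun_posSemidef f hf0 hA.1) k
    · set τ : Equiv.Perm (Fin n) := Equiv.swap i k with hτ
      set σ : Equiv.Perm (Fin n) := τ.trans (Equiv.swap (τ j) l) with hσ
      have hσi : σ i = k := by
        have h1 : τ i = k := Equiv.swap_apply_left i k
        have h2 : k ≠ τ j := by
          rw [← h1]; exact fun hc => hij (τ.injective hc.symm).symm
        simp only [hσ, Equiv.trans_apply, h1]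
        exact Equiv.swap_apply_of_ne_of_ne h2 hkl
      have hσj : σ j = l := by
        simp only [hσ, Equiv.trans_apply]
        exact Equiv.swap_apply_left _ _
      have hDNB : DN (A.submatrix σ σ) :=
        ⟨hA.1.submatrix σ, fun a b => hA.2 _ _⟩
      have := h (A.submatrix σ σ) hDNB
      rw [matFun_submatrix f A hA.1.isHermitian σ] at this
      simpa [Matrix.submatrix_apply, hσi, hσj] using this
end

section
/- Let n ≥ 2 be an integer. Suppose that for every n×n doubly nonnegative matrix A and every u > 0, the matrix A^{n−1}(A + u I)^{−1} is doubly nonnegative. Then for every real α ≥ n − 2 and every n×n doubly nonnegative matrix A, the matrix power A^α (defined by the functional calculus) is doubly nonnegative. -/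
open Matrix Filter Set Topology

namespace DNaux

open MeasureTheory Real

variable {n : ℕ} {A : Matrix (Fin n) (Fin n) ℝ}

lemma matFun_eq (hH : A.IsHermitian) (f : ℝ → ℝ) :
    matFun f A = (hH.eigenvectorUnitary : Matrix (Fin n) (Fin n) ℝ) *
      Matrix.diagonal (fun i => f (hH.eigenvalues i)) *
      (hH.eigenvectorUnitary : Matrix (Fin n) (Fin n) ℝ)ᴴ := by
  rw [matFun, dif_pos hH]

lemma star_mul_self_U (hH : A.IsHermitian) :
    ((hH.eigenvectorUnitary : Matrix (Fin n) (Fin n) ℝ))ᴴ *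
      (hH.eigenvectorUnitary : Matrix (Fin n) (Fin n) ℝ) = 1 := by
  rw [← Matrix.star_eq_conjTranspose]
  exact Unitary.coe_star_mul_self hH.eigenvectorUnitary

lemma mul_star_self_U (hH : A.IsHermitian) :
    (hH.eigenvectorUnitary : Matrix (Fin n) (Fin n) ℝ) *
      ((hH.eigenvectorUnitary : Matrix (Fin n) (Fin n) ℝ))ᴴ = 1 := by
  rw [← Matrix.star_eq_conjTranspose]
  exact Unitary.coe_mul_star_self hH.eigenvectorUnitary

lemma matFun_apply (hH : A.IsHermitian) (f : ℝ → ℝ) (i j : Fin n) :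
    matFun f A i j = ∑ k, (hH.eigenvectorUnitary : Matrix (Fin n) (Fin n) ℝ) i k *
      (hH.eigenvectorUnitary : Matrix (Fin n) (Fin n) ℝ) j k * f (hH.eigenvalues k) := by
  rw [matFun_eq hH, Matrix.mul_apply]
  simp only [Matrix.mul_diagonal, Matrix.conjTranspose_apply, star_trivial]
  exact Finset.sum_congr rfl fun k _ => by ring

lemma matFun_mul (hH : A.IsHermitian) (f g : ℝ → ℝ) :
    matFun f A * matFun g A = matFun (fun x => f x * g x) A := by
  rw [matFun_eq hH, matFun_eq hH, matFun_eq hH]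
  calc _ = (hH.eigenvectorUnitary : Matrix (Fin n) (Fin n) ℝ) *
      Matrix.diagonal (fun i => f (hH.eigenvalues i)) *
      ((((hH.eigenvectorUnitary : Matrix (Fin n) (Fin n) ℝ))ᴴ *
      (hH.eigenvectorUnitary : Matrix (Fin n) (Fin n) ℝ)) *
      (Matrix.diagonal (fun i => g (hH.eigenvalues i)) *
      (hH.eigenvectorUnitary : Matrix (Fin n) (Fin n) ℝ)ᴴ)) := by
        simp only [Matrix.mul_assoc]
    _ = _ := by
        rw [star_mul_self_U hH, Matrix.one_mul, ← Matrix.mul_assoc, Matrix.mul_assoc _ _ (Matrix.diagonal _),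
          Matrix.diagonal_mul_diagonal]

lemma matFun_congr (hH : A.IsHermitian) {f g : ℝ → ℝ}
    (h : ∀ i, f (hH.eigenvalues i) = g (hH.eigenvalues i)) :
    matFun f A = matFun g A := by
  have h2 : (fun i => f (hH.eigenvalues i)) = fun i => g (hH.eigenvalues i) := funext h
  rw [matFun_eq hH, matFun_eq hH, h2]

lemma matFun_id (hH : A.IsHermitian) : matFun (fun x => x) A = A := by
  rw [matFun_eq hH]
  have h := hH.spectral_theorem
  rw [Unitary.conjStarAlgAut_apply, Matrix.star_eq_conjTranspose] at h
  exact h.symm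

lemma matFun_one (hH : A.IsHermitian) : matFun (fun _ => 1) A = 1 := by
  rw [matFun_eq hH]
  have h1 : Matrix.diagonal (fun _ : Fin n => (1:ℝ)) = (1 : Matrix (Fin n) (Fin n) ℝ) :=
    Matrix.diagonal_one
  rw [h1, Matrix.mul_one, mul_star_self_U hH]

lemma matFun_pow (hH : A.IsHermitian) (m : ℕ) : matFun (fun x => x ^ m) A = A ^ m := by
  induction m with
  | zero => simpa using matFun_one hH
  | succ m ih =>
    rw [pow_succ, ← ih]
    nth_rewrite 3 [← matFun_id hH]
    rw [matFun_mul hH]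
    exact matFun_congr hH fun i => pow_succ _ _

lemma matFun_posSemidef (hH : A.IsHermitian) {f : ℝ → ℝ} (hf : ∀ i, 0 ≤ f (hH.eigenvalues i)) :
    (matFun f A).PosSemidef := by
  rw [matFun_eq hH]
  exact (Matrix.posSemidef_diagonal_iff.mpr hf).mul_mul_conjTranspose_same _

lemma matFun_smul_one (hH : A.IsHermitian) (c : ℝ) :
    matFun (fun _ => c) A = c • (1 : Matrix (Fin n) (Fin n) ℝ) := by
  rw [matFun_eq hH]
  have h : Matrix.diagonal (fun _ : Fin n => c) = c • (1 : Matrix (Fin n) (Fin n) ℝ) := by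
    ext i j
    by_cases hij : i = j <;> simp [Matrix.diagonal, Matrix.one_apply, hij]
  rw [h]
  rw [Matrix.mul_smul, Matrix.mul_one, Matrix.smul_mul, mul_star_self_U hH]

lemma matFun_add (hH : A.IsHermitian) (f g : ℝ → ℝ) :
    matFun f A + matFun g A = matFun (fun x => f x + g x) A := by
  rw [matFun_eq hH, matFun_eq hH, matFun_eq hH, ← Matrix.add_mul, ← Matrix.mul_add,
    ← Matrix.diagonal_add]

lemma matFun_inv_shift (hH : A.IsHermitian) (u : ℝ) (hu : ∀ i, hH.eigenvalues i + u ≠ 0) :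
    (A + u • (1 : Matrix (Fin n) (Fin n) ℝ))⁻¹ = matFun (fun x => (x + u)⁻¹) A := by
  apply Matrix.inv_eq_right_inv
  have hrep : A + u • (1 : Matrix (Fin n) (Fin n) ℝ) = matFun (fun x => x + u) A := by
    nth_rewrite 1 [← matFun_id hH]
    rw [← matFun_smul_one hH u, matFun_add hH]
  rw [hrep, matFun_mul hH]
  have : matFun (fun x => (x + u) * (x + u)⁻¹) A = matFun (fun _ => 1) A :=
    matFun_congr hH fun i => mul_inv_cancel₀ (hu i)
  rw [this, matFun_one hH]


lemma g_contOn {γ : ℝ} : ContinuousOn (fun u : ℝ => u ^ γ / (1 + u)) (Ioi 0) := by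
  apply ContinuousOn.div
  · exact fun u hu => (Real.continuousAt_rpow_const u γ (Or.inl (ne_of_gt hu))).continuousWithinAt
  · exact (continuous_const.add continuous_id).continuousOn
  · intro u hu
    have : (0:ℝ) < u := hu
    positivity

lemma g_integrable {γ : ℝ} (h1 : -1 < γ) (h2 : γ < 0) :
    IntegrableOn (fun u : ℝ => u ^ γ / (1 + u)) (Ioi 0) := by
  have hmeas1 : AEStronglyMeasurable (fun u : ℝ => u ^ γ / (1 + u))
      (volume.restrict (Ioc (0:ℝ) 1)) :=
    (g_contOn.mono Ioc_subset_Ioi_self).aestronglyMeasurable measurableSet_Ioc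
  have hmeas2 : AEStronglyMeasurable (fun u : ℝ => u ^ γ / (1 + u))
      (volume.restrict (Ioi (1:ℝ))) :=
    (g_contOn.mono (Ioi_subset_Ioi zero_le_one)).aestronglyMeasurable measurableSet_Ioi
  have part1 : IntegrableOn (fun u : ℝ => u ^ γ / (1 + u)) (Ioc 0 1) := by
    have hbase : IntegrableOn (fun u : ℝ => u ^ γ) (Ioc 0 1) := by
      have := intervalIntegral.intervalIntegrable_rpow' (a := 0) (b := 1) h1
      rwa [intervalIntegrable_iff_integrableOn_Ioc_of_le zero_le_one] at this
    refine hbase.mono' hmeas1 ?_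
    rw [ae_restrict_iff' measurableSet_Ioc]
    filter_upwards with u hu
    have hu0 : (0:ℝ) < u := hu.1
    have hnn : (0:ℝ) ≤ u ^ γ / (1 + u) := by positivity
    rw [Real.norm_eq_abs, abs_of_nonneg hnn]
    exact div_le_self (rpow_nonneg hu0.le γ) (by linarith)
  have part2 : IntegrableOn (fun u : ℝ => u ^ γ / (1 + u)) (Ioi 1) := by
    have hbase : IntegrableOn (fun u : ℝ => u ^ (γ - 1)) (Ioi 1) :=
      integrableOn_Ioi_rpow_of_lt (by linarith) one_pos
    refine hbase.mono' hmeas2 ?_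
    rw [ae_restrict_iff' measurableSet_Ioi]
    filter_upwards with u hu
    have hu0 : (0:ℝ) < u := lt_trans one_pos hu
    have hnn : (0:ℝ) ≤ u ^ γ / (1 + u) := by positivity
    rw [Real.norm_eq_abs, abs_of_nonneg hnn]
    have step : u ^ γ / (1 + u) ≤ u ^ γ / u :=
      div_le_div_of_nonneg_left (rpow_nonneg hu0.le γ) hu0 (by linarith)
    calc u ^ γ / (1 + u) ≤ u ^ γ / u := step
      _ = u ^ (γ - 1) := by rw [rpow_sub hu0, rpow_one]
  have := part1.union part2
  rwa [Ioc_union_Ioi_eq_Ioi zero_le_one] at this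

lemma C_pos {γ : ℝ} (h1 : -1 < γ) (h2 : γ < 0) :
    0 < ∫ u in Ioi (0:ℝ), u ^ γ / (1 + u) := by
  have hnn : 0 ≤ᵐ[volume.restrict (Ioi (0:ℝ))] fun u : ℝ => u ^ γ / (1 + u) := by
    filter_upwards [ae_restrict_mem measurableSet_Ioi] with u hu
    have : (0:ℝ) < u := hu
    positivity
  rw [setIntegral_pos_iff_support_of_nonneg_ae hnn (g_integrable h1 h2)]
  have hsupp : Ioi (0:ℝ) ⊆ Function.support fun u : ℝ => u ^ γ / (1 + u) := by
    intro u hu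
    have hu0 : (0:ℝ) < u := hu
    have : (0:ℝ) < u ^ γ / (1 + u) := by positivity
    exact ne_of_gt this
  calc (0:ENNReal) < volume (Ioi (0:ℝ)) := by simp [Real.volume_Ioi]
    _ = volume ((Function.support fun u : ℝ => u ^ γ / (1 + u)) ∩ Ioi 0) := by
        rw [inter_eq_right.mpr hsupp]

lemma shifted_congr {γ x : ℝ} (hx : 0 < x) :
    ∀ v ∈ Ioi (0:ℝ), (fun u : ℝ => u ^ γ / (x + u)) (x * v)
      = x ^ (γ - 1) * (v ^ γ / (1 + v)) := by
  intro v hv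
  have hv0 : (0:ℝ) < v := hv
  have hden : x + x * v = x * (1 + v) := by ring
  simp only
  rw [mul_rpow hx.le hv0.le, hden, rpow_sub hx, rpow_one]
  field_simp

lemma shifted_integrable {γ x : ℝ} (h1 : -1 < γ) (h2 : γ < 0) (hx : 0 < x) :
    IntegrableOn (fun u : ℝ => u ^ γ / (x + u)) (Ioi 0) := by
  have key := (integrableOn_Ioi_comp_mul_left_iff (fun u : ℝ => u ^ γ / (x + u)) 0 hx)
  rw [mul_zero] at key
  rw [← key]
  have : IntegrableOn (fun v : ℝ => x ^ (γ - 1) * (v ^ γ / (1 + v))) (Ioi 0) :=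
    (g_integrable h1 h2).const_mul _
  exact this.congr_fun (fun v hv => (shifted_congr hx v hv).symm) measurableSet_Ioi

lemma shifted_integral {γ x : ℝ} (h1 : -1 < γ) (h2 : γ < 0) (hx : 0 < x) :
    ∫ u in Ioi (0:ℝ), u ^ γ / (x + u)
      = x ^ γ * ∫ u in Ioi (0:ℝ), u ^ γ / (1 + u) := by
  have key := integral_comp_mul_left_Ioi (fun u : ℝ => u ^ γ / (x + u)) 0 hx
  rw [mul_zero] at key
  have lhs_eq : (∫ v in Ioi (0:ℝ), (fun u : ℝ => u ^ γ / (x + u)) (x * v))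
      = x ^ (γ - 1) * ∫ v in Ioi (0:ℝ), v ^ γ / (1 + v) := by
    rw [setIntegral_congr_fun measurableSet_Ioi (shifted_congr hx)]
    exact MeasureTheory.integral_const_mul _ _
  rw [lhs_eq] at key
  have hxne : x ≠ 0 := ne_of_gt hx
  have : (∫ u in Ioi (0:ℝ), u ^ γ / (x + u))
      = x * (x ^ (γ - 1) * ∫ v in Ioi (0:ℝ), v ^ γ / (1 + v)) := by
    rw [key, smul_eq_mul, ← mul_assoc, mul_inv_cancel₀ hxne, one_mul]
  rw [this, ← mul_assoc]
  congr 1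
  rw [rpow_sub hx, rpow_one]
  field_simp


lemma key_scalar {N : ℕ} {γ : ℝ} (hγ1 : -1 < γ) (hγ2 : γ < 0) {m : ℕ} (hm : m ≠ 0)
    (c lam : Fin N → ℝ) (hlam : ∀ k, 0 ≤ lam k)
    (hnn : ∀ u : ℝ, 0 < u → 0 ≤ ∑ k, c k * (lam k ^ m * (lam k + u)⁻¹)) :
    0 ≤ ∑ k, c k * lam k ^ ((m:ℝ) + γ) := by
  set C := ∫ u in Ioi (0:ℝ), u ^ γ / (1 + u) with hCdef
  have hC : 0 < C := C_pos hγ1 hγ2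
  set F : Fin N → ℝ → ℝ := fun k u => (c k * lam k ^ m) * (u ^ γ / (lam k + u)) with hF
  have hβpos : (0:ℝ) < (m:ℝ) + γ := by
    have h1m : (1:ℝ) ≤ (m:ℝ) := by exact_mod_cast Nat.one_le_iff_ne_zero.mpr hm
    linarith
  have hFz : ∀ k, lam k = 0 → F k = fun _ => 0 := by
    intro k hk
    funext u
    rw [hF]
    simp [hk, zero_pow hm]
  have hFint : ∀ k, IntegrableOn (F k) (Ioi 0) := by
    intro k
    rcases (hlam k).eq_or_lt with hk0 | hk0
    · rw [hFz k hk0.symm]; exact integrableOn_zero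
    · exact (shifted_integrable hγ1 hγ2 hk0).const_mul _
  have hperk : ∀ k, c k * lam k ^ ((m:ℝ) + γ) = C⁻¹ * ∫ u in Ioi (0:ℝ), F k u := by
    intro k
    rcases (hlam k).eq_or_lt with hk0 | hk0
    · rw [hFz k hk0.symm, ← hk0, Real.zero_rpow (ne_of_gt hβpos)]
      simp
    · have hint : ∫ u in Ioi (0:ℝ), u ^ γ / (lam k + u) = lam k ^ γ * C :=
        shifted_integral hγ1 hγ2 hk0
      have hIF : ∫ u in Ioi (0:ℝ), F k u = (c k * lam k ^ m) * (lam k ^ γ * C) := by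
        rw [hF]
        rw [MeasureTheory.integral_const_mul, hint]
      rw [hIF]
      have hpow : (lam k : ℝ) ^ (m:ℕ) * lam k ^ γ = lam k ^ ((m:ℝ) + γ) := by
        rw [← Real.rpow_natCast (lam k) m, ← Real.rpow_add hk0]
      calc c k * lam k ^ ((m:ℝ) + γ)
          = c k * (lam k ^ (m:ℕ) * lam k ^ γ) * (C⁻¹ * C) := by
            rw [hpow, inv_mul_cancel₀ (ne_of_gt hC), mul_one]
        _ = C⁻¹ * ((c k * lam k ^ (m:ℕ)) * (lam k ^ γ * C)) := by ring
  calc (0:ℝ) ≤ C⁻¹ * ∫ u in Ioi (0:ℝ), ∑ k, F k u := by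
        apply mul_nonneg (inv_nonneg.mpr hC.le)
        apply setIntegral_nonneg measurableSet_Ioi
        intro u hu
        have hu0 : (0:ℝ) < u := hu
        have hsum : ∑ k, F k u = u ^ γ * ∑ k, c k * (lam k ^ m * (lam k + u)⁻¹) := by
          rw [Finset.mul_sum]
          refine Finset.sum_congr rfl fun k _ => ?_
          simp only [hF, div_eq_mul_inv]
          ring
        rw [hsum]
        exact mul_nonneg (Real.rpow_pos_of_pos hu0 γ).le (hnn u hu0)
    _ = ∑ k, c k * lam k ^ ((m:ℝ) + γ) := by
        rw [MeasureTheory.integral_finset_sum _ (fun k _ => hFint k), Finset.mul_sum]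
        exact Finset.sum_congr rfl fun k _ => (hperk k).symm

end DNaux

theorem stmt_11 (n : ℕ) (hn : 2 ≤ n)
    (H : ∀ A : Matrix (Fin n) (Fin n) ℝ, DN A → ∀ u : ℝ, 0 < u →
      DN (A ^ (n - 1) * (A + u • (1 : Matrix (Fin n) (Fin n) ℝ))⁻¹))
    (α : ℝ) (hα : (n : ℝ) - 2 ≤ α)
    (A : Matrix (Fin n) (Fin n) ℝ) (hA : DN A) :
    DN (matFun (fun x => x ^ α) A) := by
  classical
  obtain ⟨hPSD, hEnt⟩ := hA
  have hH : A.IsHermitian := hPSD.1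
  have hev : ∀ k, 0 ≤ hH.eigenvalues k := fun k => hPSD.eigenvalues_nonneg k
  have h2n : (2:ℝ) ≤ (n:ℝ) := by exact_mod_cast hn
  have hncast : ((n-1:ℕ):ℝ) = (n:ℝ) - 1 := by
    rw [Nat.cast_sub (le_trans one_le_two hn)]
    simp
  have hm0 : n - 1 ≠ 0 := Nat.sub_ne_zero_of_lt (lt_of_lt_of_le one_lt_two hn)
  have powEnt : ∀ m : ℕ, ∀ i j, 0 ≤ (A ^ m) i j := by
    intro m
    induction m with
    | zero =>
      intro i j
      rw [pow_zero]
      by_cases h : i = j <;> simp [Matrix.one_apply, h]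
    | succ m ih =>
      intro i j
      rw [pow_succ, Matrix.mul_apply]
      exact Finset.sum_nonneg fun k _ => mul_nonneg (ih i k) (hEnt k j)
  have core : ∀ β : ℝ, (n:ℝ) - 2 < β → β ≤ (n:ℝ) - 1 →
      ∀ i j, 0 ≤ matFun (fun x => x ^ β) A i j := by
    intro β hβ1 hβ2 i j
    rcases hβ2.eq_or_lt with heq | hlt
    · have hfun : matFun (fun x => x ^ β) A = A ^ (n-1) := by
        rw [← DNaux.matFun_pow hH]
        exact DNaux.matFun_congr hH fun k => by rw [heq, ← hncast, Real.rpow_natCast]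
      rw [hfun]
      exact powEnt (n-1) i j
    · set γ := β - ((n:ℝ) - 1) with hγdef
      have hγ1 : -1 < γ := by rw [hγdef]; linarith
      have hγ2 : γ < 0 := by rw [hγdef]; linarith
      have hMent : ∀ u : ℝ, 0 < u →
          0 ≤ ∑ k, ((hH.eigenvectorUnitary : Matrix (Fin n) (Fin n) ℝ) i k *
            (hH.eigenvectorUnitary : Matrix (Fin n) (Fin n) ℝ) j k) *
            (hH.eigenvalues k ^ (n-1) * (hH.eigenvalues k + u)⁻¹) := by
        intro u hu
        have hM : A ^ (n-1) * (A + u • (1:Matrix (Fin n) (Fin n) ℝ))⁻¹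
            = matFun (fun x => x ^ (n-1) * (x + u)⁻¹) A := by
          rw [DNaux.matFun_inv_shift hH u (fun k => ne_of_gt (by have := hev k; linarith)),
            ← DNaux.matFun_pow hH (n-1), DNaux.matFun_mul hH]
        have hMij := (H A ⟨hPSD, hEnt⟩ u hu).2 i j
        rw [hM, DNaux.matFun_apply hH] at hMij
        exact hMij
      have hkey := DNaux.key_scalar hγ1 hγ2 hm0
        (fun k => (hH.eigenvectorUnitary : Matrix (Fin n) (Fin n) ℝ) i k *
          (hH.eigenvectorUnitary : Matrix (Fin n) (Fin n) ℝ) j k)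
        hH.eigenvalues hev hMent
      rw [DNaux.matFun_apply hH]
      have hβeq : ((n-1:ℕ):ℝ) + γ = β := by rw [hncast, hγdef]; ring
      rw [hβeq] at hkey
      exact hkey
  have endpoint : ∀ i j, 0 ≤ matFun (fun x => x ^ ((n:ℝ) - 2)) A i j := by
    rcases eq_or_lt_of_le (by linarith : (0:ℝ) ≤ (n:ℝ) - 2) with h0 | h0
    · intro i j
      have hone : matFun (fun x => x ^ ((n:ℝ)-2)) A = 1 := by
        rw [← DNaux.matFun_one hH]
        exact DNaux.matFun_congr hH fun k => by rw [← h0, Real.rpow_zero]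
      rw [hone]
      by_cases h : i = j <;> simp [Matrix.one_apply, h]
    · intro i j
      have tend : Tendsto (fun β : ℝ => matFun (fun x => x ^ β) A i j)
          (𝓝[>] ((n:ℝ)-2)) (𝓝 (matFun (fun x => x ^ ((n:ℝ)-2)) A i j)) := by
        simp only [DNaux.matFun_apply hH]
        apply tendsto_finset_sum
        intro k _
        apply Tendsto.mul tendsto_const_nhds
        rcases (hev k).eq_or_lt with hk0 | hk0
        · rw [← hk0, Real.zero_rpow (ne_of_gt h0)]
          refine tendsto_const_nhds.congr' ?_
          filter_upwards [self_mem_nhdsWithin] with β hβ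
          exact (Real.zero_rpow (ne_of_gt (lt_trans h0 hβ))).symm
        · have hcont : ContinuousAt (fun β : ℝ => hH.eigenvalues k ^ β) ((n:ℝ)-2) := by
            have h1 := Real.continuousAt_rpow (hH.eigenvalues k, (n:ℝ)-2)
              (Or.inl (ne_of_gt hk0))
            exact h1.comp ((continuous_const.prodMk continuous_id).continuousAt)
          exact hcont.tendsto.mono_left nhdsWithin_le_nhds
      have ev : ∀ᶠ β in 𝓝[>] ((n:ℝ)-2), 0 ≤ matFun (fun x => x ^ β) A i j := by
        filter_upwards [Ioo_mem_nhdsGT_of_mem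
          (Set.left_mem_Ico.mpr (by linarith : (n:ℝ)-2 < (n:ℝ)-1))] with β hβ
        exact core β hβ.1 hβ.2.le i j
      exact ge_of_tendsto tend ev
  refine ⟨DNaux.matFun_posSemidef hH (fun k => Real.rpow_nonneg (hev k) α), ?_⟩
  intro i j
  rcases eq_or_lt_of_le hα with hEq | hGt
  · rw [← hEq]
    exact endpoint i j
  · by_cases hle : α ≤ (n:ℝ) - 1
    · exact core α hGt hle i j
    · push_neg at hle
      set m : ℕ := ⌈α - ((n:ℝ)-1)⌉₊ with hmdef
      have hm1 : α - ((n:ℝ)-1) ≤ (m:ℝ) := Nat.le_ceil _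
      have hm2 : (m:ℝ) < α - ((n:ℝ)-1) + 1 := Nat.ceil_lt_add_one (by linarith)
      set β := α - (m:ℝ) with hβdef
      have hβ1 : (n:ℝ) - 2 < β := by rw [hβdef]; linarith
      have hβ2 : β ≤ (n:ℝ) - 1 := by rw [hβdef]; linarith
      have hαpos : 0 < α := by linarith
      have hsplit : matFun (fun x => x ^ α) A = matFun (fun x => x ^ β) A * A ^ m := by
        rw [← DNaux.matFun_pow hH m, DNaux.matFun_mul hH]
        refine DNaux.matFun_congr hH fun k => ?_
        rcases (hev k).eq_or_lt with hk0 | hk0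
        · rw [← hk0, Real.zero_rpow (ne_of_gt hαpos),
            Real.zero_rpow (ne_of_gt (by linarith : (0:ℝ) < β)), zero_mul]
        · rw [← Real.rpow_natCast (hH.eigenvalues k) m, ← Real.rpow_add hk0]
          congr 1
          rw [hβdef]
          ring
      rw [hsplit, Matrix.mul_apply]
      exact Finset.sum_nonneg fun k _ => mul_nonneg (core β hβ1 hβ2 i k) (powEnt m k j)
end

section
/- Let k ≥ 0 be an integer and let q be a real number with k < q < k + 1. Then for every x > 0, x^q = (sin((q − k)π)/π) · ∫₀^∞ t^{q−k−1} x^{k+1} (x + t)^{−1} dt, where the integral is a convergent improper Riemann (Lebesgue) integral over (0, ∞). -/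
open Matrix Filter Set Topology

open MeasureTheory Real in
lemma beta_refl_int {a : ℝ} (ha0 : 0 < a) (ha1 : a < 1) :
    IntegrableOn (fun u : ℝ => u ^ (a - 1) * (1 - u) ^ (-a)) (Ioo 0 1) ∧
    ∫ u in Ioo (0:ℝ) 1, u ^ (a - 1) * (1 - u) ^ (-a) = π / Real.sin (π * a) := by
  set F : ℝ → ℂ := fun u => (u : ℂ) ^ ((a : ℂ) - 1) * ((1 : ℂ) - u) ^ (-(a : ℂ)) with hF
  have hFint : IntervalIntegrable F volume 0 1 := by
    have h := Complex.betaIntegral_convergent (u := (a : ℂ)) (v := ((1 - a : ℝ) : ℂ))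
      (by simpa using ha0) (by simp [ha1])
    have : ((1 - a : ℝ) : ℂ) - 1 = -(a : ℂ) := by push_cast; ring
    simpa [hF, this] using h
  have hae : ∀ u ∈ Ioo (0:ℝ) 1,
      F u = ((u ^ (a - 1) * (1 - u) ^ (-a) : ℝ) : ℂ) := by
    intro u hu
    have h1 : (0:ℝ) ≤ u := hu.1.le
    have h2 : (0:ℝ) ≤ 1 - u := by linarith [hu.2]
    rw [hF]
    push_cast
    rw [Complex.ofReal_cpow h1, Complex.ofReal_cpow h2]
    push_cast
    ring
  have hFIoo : IntegrableOn F (Ioo 0 1) := by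
    have := (intervalIntegrable_iff_integrableOn_Ioo_of_le (by norm_num : (0:ℝ) ≤ 1)).mp hFint
    exact this
  have haeR : (fun u : ℝ => u ^ (a - 1) * (1 - u) ^ (-a)) =ᵐ[volume.restrict (Ioo (0:ℝ) 1)]
      fun u => (F u).re := by
    filter_upwards [ae_restrict_mem measurableSet_Ioo] with u hu
    rw [hae u hu, Complex.ofReal_re]
  have hint : IntegrableOn (fun u : ℝ => u ^ (a - 1) * (1 - u) ^ (-a)) (Ioo 0 1) :=
    (hFIoo.re).congr haeR.symm
  refine ⟨hint, ?_⟩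
  -- complex value
  have hsin : Complex.sin (π * a) ≠ 0 := by
    rw [← Complex.ofReal_mul, ← Complex.ofReal_sin]
    simp only [ne_eq, Complex.ofReal_eq_zero]
    exact ne_of_gt (Real.sin_pos_of_pos_of_lt_pi (by positivity)
      (by nlinarith [Real.pi_pos]))
  have hbeta : Complex.betaIntegral a (1 - a) = (π : ℂ) / Complex.sin (π * a) := by
    have h1 := Complex.Gamma_mul_Gamma_eq_betaIntegral
      (s := (a : ℂ)) (t := 1 - (a : ℂ)) (by simpa using ha0)
      (by simp [Complex.sub_re, ha1])
    have h2 := Complex.Gamma_mul_Gamma_one_sub (a : ℂ)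
    rw [h2] at h1
    simpa [Complex.Gamma_one] using h1.symm
  have hbeta2 : (∫ u in Ioo (0:ℝ) 1, F u) = (π : ℂ) / Complex.sin (π * a) := by
    rw [← hbeta, Complex.betaIntegral]
    rw [intervalIntegral.integral_of_le (by norm_num : (0:ℝ) ≤ 1),
      ← integral_Ioc_eq_integral_Ioo]
    congr 1
    push_cast
    congr 1
    ext u
    congr 1
    push_cast
    simp only [hF]
    ring_nf
  have hre : (((π / Real.sin (π * a)) : ℝ) : ℂ) = (π : ℂ) / Complex.sin (↑π * ↑a) := by
    push_cast
    ring
  calc ∫ u in Ioo (0:ℝ) 1, u ^ (a - 1) * (1 - u) ^ (-a)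
      = ∫ u in Ioo (0:ℝ) 1, (F u).re :=
        setIntegral_congr_fun measurableSet_Ioo (fun u hu => by rw [hae u hu, Complex.ofReal_re])
    _ = (∫ u in Ioo (0:ℝ) 1, F u).re := by simpa using integral_re hFIoo
    _ = π / Real.sin (π * a) := by rw [hbeta2, ← hre, Complex.ofReal_re]

open MeasureTheory Real in
theorem stmt_12 (k : ℕ) (q : ℝ) (hq1 : (k : ℝ) < q) (hq2 : q < k + 1)
    (x : ℝ) (hx : 0 < x) :
    MeasureTheory.IntegrableOn
      (fun t : ℝ => t ^ (q - k - 1) * x ^ (k + 1) * (x + t)⁻¹) (Set.Ioi 0) ∧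
    x ^ q = (Real.sin ((q - k) * Real.pi) / Real.pi) *
      ∫ t in Set.Ioi (0 : ℝ), t ^ (q - k - 1) * x ^ (k + 1) * (x + t)⁻¹ := by
  set a : ℝ := q - k with ha
  have ha0 : 0 < a := by simp [ha]; linarith
  have ha1 : a < 1 := by simp [ha]; linarith
  obtain ⟨hbint, hbval⟩ := beta_refl_int ha0 ha1
  set f : ℝ → ℝ := fun u => x * u / (1 - u) with hf
  have hder : ∀ u ∈ Ioo (0:ℝ) 1, HasDerivWithinAt f (x / (1 - u) ^ 2) (Ioo 0 1) u := by
    intro u hu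
    have h1 : (1:ℝ) - u ≠ 0 := by have := hu.2; intro h; linarith [sub_eq_zero.mp h]
    have hd : HasDerivAt f (x / (1 - u) ^ 2) u := by
      have := (((hasDerivAt_id u).const_mul x).div
        ((hasDerivAt_const u (1:ℝ)).sub (hasDerivAt_id u)) h1)
      refine this.congr_deriv ?_
      simp only [Pi.sub_apply, id_eq, mul_one, zero_sub]
      ring
    exact hd.hasDerivWithinAt
  have hinj : InjOn f (Ioo 0 1) := by
    intro u hu v hv h
    have h1 : (1:ℝ) - u ≠ 0 := by have := hu.2; intro hc; linarith [sub_eq_zero.mp hc]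
    have h2 : (1:ℝ) - v ≠ 0 := by have := hv.2; intro hc; linarith [sub_eq_zero.mp hc]
    rw [hf] at h
    simp only [div_eq_div_iff h1 h2] at h
    have : x * u = x * v := by nlinarith
    exact mul_left_cancel₀ (ne_of_gt hx) this
  have himg : f '' Ioo 0 1 = Ioi 0 := by
    ext t
    constructor
    · rintro ⟨u, hu, rfl⟩
      have h1 : 0 < 1 - u := by linarith [hu.2]
      have : 0 < x * u / (1 - u) := div_pos (mul_pos hx hu.1) h1
      simpa [hf] using this
    · intro ht
      have ht' : (0:ℝ) < t := ht
      have hxt : 0 < x + t := by linarith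
      refine ⟨t / (x + t), ⟨by positivity, by rw [div_lt_one hxt]; linarith⟩, ?_⟩
      rw [hf]
      have h1 : 1 - t / (x + t) = x / (x + t) := by field_simp; ring
      field_simp [h1]
      rw [add_sub_cancel_right, div_self hx.ne']
  -- pointwise identity
  have hpt : ∀ u ∈ Ioo (0:ℝ) 1,
      |x / (1 - u) ^ 2| • ((f u) ^ (a - 1) * x ^ (k + 1) * (x + f u)⁻¹)
        = (x ^ (k + 1) * x ^ (a - 1)) * (u ^ (a - 1) * (1 - u) ^ (-a)) := by
    intro u hu
    have h0 : 0 < u := hu.1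
    have h1 : 0 < 1 - u := by linarith [hu.2]
    have hfu : f u = x * u / (1 - u) := rfl
    have hxfu : x + f u = x / (1 - u) := by
      rw [hfu]; field_simp; ring
    rw [smul_eq_mul, hxfu, hfu, abs_of_pos (by positivity)]
    rw [Real.div_rpow (by positivity) h1.le, Real.mul_rpow hx.le h0.le]
    have key : (1 - u) ^ (a - 1) * (1 - u) ^ (-a) = (1 - u)⁻¹ := by
      rw [← Real.rpow_add h1]
      have : a - 1 + -a = -1 := by ring
      rw [this, Real.rpow_neg_one]
    have hne1 : (1 - u) ^ (a - 1) ≠ 0 := by positivity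
    have hB : (1 - u) ^ (-a) = (1 - u)⁻¹ / (1 - u) ^ (a - 1) :=
      (eq_div_iff hne1).mpr (by rw [mul_comm]; exact key)
    rw [hB]
    field_simp
  have hIntg : IntegrableOn (fun t : ℝ => t ^ (a - 1) * x ^ (k + 1) * (x + t)⁻¹) (Ioi 0) := by
    rw [← himg, integrableOn_image_iff_integrableOn_abs_deriv_smul measurableSet_Ioo hder hinj]
    refine ((hbint.const_mul (x ^ (k + 1) * x ^ (a - 1))).congr ?_)
    filter_upwards [ae_restrict_mem measurableSet_Ioo] with u hu
    exact (hpt u hu).symm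
  have hval : ∫ t in Ioi (0:ℝ), t ^ (a - 1) * x ^ (k + 1) * (x + t)⁻¹
      = (x ^ (k + 1) * x ^ (a - 1)) * (π / Real.sin (π * a)) := by
    rw [← himg, integral_image_eq_integral_abs_deriv_smul measurableSet_Ioo hder hinj]
    rw [setIntegral_congr_fun measurableSet_Ioo hpt, integral_const_mul, hbval]
  have hqa : q - k - 1 = a - 1 := by rw [ha]
  rw [hqa]
  refine ⟨hIntg, ?_⟩
  rw [hval]
  have hsin : 0 < Real.sin ((q - k) * π) := by
    apply Real.sin_pos_of_pos_of_lt_pi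
    · positivity
    · nlinarith [Real.pi_pos]
  have hsin' : Real.sin (π * a) = Real.sin ((q - k) * π) := by rw [ha, mul_comm]
  rw [hsin']
  have hpow : (x : ℝ) ^ (k + 1) = x ^ ((k : ℝ) + 1) := by
    rw [← Real.rpow_natCast x (k + 1)]
    push_cast
    ring_nf
  rw [hpow, ← Real.rpow_add hx]
  have : (k : ℝ) + 1 + (a - 1) = q := by rw [ha]; ring
  rw [this]
  field_simp [hsin.ne']
  rw [show a * π = (q - ↑k) * π from by rw [ha]]
  ring_nf
  have hs := hsin.ne'
  ring_nf at hs
  exact (mul_inv_cancel₀ hs).symm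
end

section
/- Let A = (a_{ij}) be a 3×3 doubly nonnegative matrix and let u > 0. Then the (1,2) entry of A² (A + u I)^{−1} equals det(A + uI)^{−1} · ( a₁₂ det A + a₁₂ u (C₁₁ + C₂₂ + C₃₃) + u² (a₁₂ a₁₁ + a₁₂ a₂₂ + a₁₃ a₂₃) ), where C_{ii} denotes the principal 2×2 minor of A obtained by deleting row i and column i; in particular this entry is nonnegative. -/
open Matrix Filter Set Topology

lemma psd_det_nonneg {n : ℕ} {A : Matrix (Fin n) (Fin n) ℝ} (h : A.PosSemidef) :
    0 ≤ A.det := by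
  exact h.det_nonneg

lemma psd_minor {A : Matrix (Fin 3) (Fin 3) ℝ} (h : A.PosSemidef) (i j : Fin 3) :
    0 ≤ A i i * A j j - A i j * A j i := by
  have := psd_det_nonneg (h.submatrix (fun k : Fin 2 => if k = 0 then i else j))
  simpa [Matrix.det_fin_two, Matrix.submatrix_apply] using this

theorem stmt_16 (A : Matrix (Fin 3) (Fin 3) ℝ) (hA : DN A) (u : ℝ) (hu : 0 < u) :
    (A ^ 2 * (A + u • (1 : Matrix (Fin 3) (Fin 3) ℝ))⁻¹) 0 1 =
      ((A + u • (1 : Matrix (Fin 3) (Fin 3) ℝ)).det)⁻¹ *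
        (A 0 1 * A.det +
          A 0 1 * u *
            ((A 1 1 * A 2 2 - A 1 2 * A 2 1) +
             (A 0 0 * A 2 2 - A 0 2 * A 2 0) +
             (A 0 0 * A 1 1 - A 0 1 * A 1 0)) +
          u ^ 2 * (A 0 1 * A 0 0 + A 0 1 * A 1 1 + A 0 2 * A 1 2)) ∧
    0 ≤ (A ^ 2 * (A + u • (1 : Matrix (Fin 3) (Fin 3) ℝ))⁻¹) 0 1 := by
  obtain ⟨hpsd, hnn⟩ := hA
  have hsym := hpsd.isHermitian
  have h10 : A 1 0 = A 0 1 := by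
    simpa [Matrix.conjTranspose_apply] using congrFun (congrFun hsym 0) 1
  have h20 : A 2 0 = A 0 2 := by
    simpa [Matrix.conjTranspose_apply] using congrFun (congrFun hsym 0) 2
  have h21 : A 2 1 = A 1 2 := by
    simpa [Matrix.conjTranspose_apply] using congrFun (congrFun hsym 1) 2
  have hB : (A + u • (1 : Matrix (Fin 3) (Fin 3) ℝ)).PosDef := by
    refine Matrix.PosDef.posSemidef_add hpsd ?_
    rw [Matrix.smul_one_eq_diagonal]
    exact Matrix.posDef_diagonal_iff.mpr fun _ => hu
  have hdet : 0 < (A + u • (1 : Matrix (Fin 3) (Fin 3) ℝ)).det := hB.det_pos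
  have key : (A ^ 2 * (A + u • (1 : Matrix (Fin 3) (Fin 3) ℝ))⁻¹) 0 1 =
      ((A + u • (1 : Matrix (Fin 3) (Fin 3) ℝ)).det)⁻¹ *
        (A 0 1 * A.det +
          A 0 1 * u *
            ((A 1 1 * A 2 2 - A 1 2 * A 2 1) +
             (A 0 0 * A 2 2 - A 0 2 * A 2 0) +
             (A 0 0 * A 1 1 - A 0 1 * A 1 0)) +
          u ^ 2 * (A 0 1 * A 0 0 + A 0 1 * A 1 1 + A 0 2 * A 1 2)) := by
    rw [Matrix.inv_def, Ring.inverse_eq_inv', Matrix.mul_smul, Matrix.smul_apply, smul_eq_mul]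
    congr 1
    simp only [pow_two, Matrix.mul_apply, Fin.sum_univ_three, Matrix.adjugate_fin_three,
      Matrix.det_fin_three, Matrix.add_apply, Matrix.smul_apply, Matrix.one_apply,
      Matrix.of_apply, Matrix.cons_val', Matrix.cons_val_zero, Matrix.cons_val_one,
      Matrix.head_cons, Matrix.empty_val', Matrix.cons_val_fin_one, Matrix.head_fin_const,
      Matrix.cons_val_two, Matrix.tail_cons, if_true, smul_eq_mul]
    norm_num [h10, h20, h21, show (0:Fin 3) ≠ 2 by decide, show (2:Fin 3) ≠ 0 by decide,
      show (2:Fin 3) ≠ 1 by decide, show (1:Fin 3) ≠ 2 by decide,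
      show (1:Fin 3) ≠ 0 by decide, show (0:Fin 3) ≠ 1 by decide]
    ring
  refine ⟨key, ?_⟩
  rw [key]
  have m12 : 0 ≤ A 1 1 * A 2 2 - A 1 2 * A 2 1 := psd_minor hpsd 1 2
  have m02 : 0 ≤ A 0 0 * A 2 2 - A 0 2 * A 2 0 := psd_minor hpsd 0 2
  have m01 : 0 ≤ A 0 0 * A 1 1 - A 0 1 * A 1 0 := psd_minor hpsd 0 1
  have hdA : 0 ≤ A.det := psd_det_nonneg hpsd
  apply mul_nonneg (inv_nonneg.2 hdet.le)
  have h01 := hnn 0 1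
  refine add_nonneg (add_nonneg ?_ ?_) ?_
  · exact mul_nonneg h01 hdA
  · exact mul_nonneg (mul_nonneg h01 hu.le) (by linarith)
  · refine mul_nonneg (sq_nonneg u) ?_
    have := hnn 0 0; have := hnn 1 1; have := hnn 0 2; have := hnn 1 2
    positivity
end

section
/- Let u > 0, β < 0, and let α ∈ (m, m+1) for some nonnegative integer m. Then there exists x > 0 such that the (m+2)-th derivative of the function x ↦ x^α (x + u)^{−β} is strictly negative at x; indeed this derivative is negative for all sufficiently small x > 0. -/
open Matrix Filter Set Topology

noncomputable def Sfun (u α β : ℝ) (n : ℕ) (c : ℕ → ℝ) (x : ℝ) : ℝ :=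
  ∑ k ∈ Finset.range (n + 1), c k * x ^ (α - k) * (x + u) ^ (-β - n + k)

lemma term_hasDerivAt (u c p q : ℝ) {x : ℝ} (hx : 0 < x) (hu : 0 < u) :
    HasDerivAt (fun y : ℝ => c * y ^ p * (y + u) ^ q)
      (c * (p * x ^ (p - 1) * (x + u) ^ q) +
        c * (q * (x ^ p * (x + u) ^ (q - 1)))) x := by
  have h1 : HasDerivAt (fun y : ℝ => y ^ p) (p * x ^ (p - 1)) x :=
    Real.hasDerivAt_rpow_const (Or.inl hx.ne')
  have h0 : HasDerivAt (fun y : ℝ => y + u) 1 x := (hasDerivAt_id x).add_const u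
  have hxu : x + u ≠ 0 := by positivity
  have h2 : HasDerivAt (fun y : ℝ => (y + u) ^ q) (q * (x + u) ^ (q - 1)) x := by
    simpa using h0.rpow_const (Or.inl hxu)
  have := ((h1.const_mul c).fun_mul h2)
  refine this.congr_deriv ?_
  ring

lemma key (u β : ℝ) (hu : 0 < u) (α : ℝ) (n : ℕ) :
    ∃ c : ℕ → ℝ, c n = (∏ j ∈ Finset.range n, (α - j)) ∧
      ∀ x : ℝ, 0 < x →
        iteratedDeriv n (fun y : ℝ => y ^ α * (y + u) ^ (-β)) x = Sfun u α β n c x := by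
  induction n with
  | zero =>
    refine ⟨fun _ => 1, by simp, fun x hx => ?_⟩
    simp [Sfun]
  | succ n ih =>
    obtain ⟨c, hc, hS⟩ := ih
    set c' : ℕ → ℝ := fun j => (if j = 0 then 0 else c (j - 1) * (α - (j - 1 : ℕ))) +
        (if j = n + 1 then 0 else c j * (-β - n + j)) with hc'
    refine ⟨c', ?_, ?_⟩
    · simp [hc', hc, Finset.prod_range_succ]
    · intro x hx
      rw [iteratedDeriv_succ]
      have hev : iteratedDeriv n (fun y : ℝ => y ^ α * (y + u) ^ (-β))
          =ᶠ[𝓝 x] Sfun u α β n c := by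
        filter_upwards [isOpen_Ioi.mem_nhds hx] with y hy
        exact hS y hy
      rw [hev.deriv_eq]
      have hD : HasDerivAt (Sfun u α β n c)
          (∑ k ∈ Finset.range (n + 1),
            (c k * ((α - k) * x ^ (α - k - 1) * (x + u) ^ (-β - n + k)) +
              c k * ((-β - n + k) * (x ^ (α - k) * (x + u) ^ (-β - n + k - 1))))) x := by
        apply HasDerivAt.fun_sum
        intro k hk
        exact term_hasDerivAt u (c k) (α - k) (-β - n + k) hx hu
      rw [hD.deriv]
      have e1 : ∑ j ∈ Finset.range (n + 1 + 1),
          (if j = 0 then (0:ℝ) else c (j - 1) * (α - (j - 1 : ℕ))) * x ^ (α - j) *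
            (x + u) ^ (-β - (n + 1 : ℕ) + j)
          = ∑ k ∈ Finset.range (n + 1),
            c k * ((α - k) * x ^ (α - k - 1) * (x + u) ^ (-β - n + k)) := by
        rw [Finset.sum_range_succ' (fun j => (if j = 0 then (0:ℝ) else c (j - 1) * (α - (j - 1 : ℕ))) * x ^ (α - j) * (x + u) ^ (-β - (n + 1 : ℕ) + j)) (n + 1)]
        simp only [if_pos rfl, if_true, eq_self_iff_true, zero_mul, add_zero]
        refine Finset.sum_congr rfl fun k hk => ?_
        simp only [Nat.add_sub_cancel, if_neg (Nat.succ_ne_zero k)]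
        have eA : α - ((k + 1 : ℕ) : ℝ) = α - k - 1 := by push_cast; ring
        have eB : -β - ((n + 1 : ℕ) : ℝ) + ((k + 1 : ℕ) : ℝ) = -β - n + k := by
          push_cast; ring
        rw [eA, eB]; ring
      have e2 : ∑ j ∈ Finset.range (n + 1 + 1),
          (if j = n + 1 then (0:ℝ) else c j * (-β - n + j)) * x ^ (α - j) *
            (x + u) ^ (-β - (n + 1 : ℕ) + j)
          = ∑ k ∈ Finset.range (n + 1),
            c k * ((-β - n + k) * (x ^ (α - k) * (x + u) ^ (-β - n + k - 1))) := by
        rw [Finset.sum_range_succ]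
        simp only [if_pos rfl, if_true, eq_self_iff_true, zero_mul, add_zero]
        refine Finset.sum_congr rfl fun k hk => ?_
        have hkne : k ≠ n + 1 := by
          have := Finset.mem_range.mp hk; omega
        simp only [if_neg hkne]
        have eB : -β - ((n + 1 : ℕ) : ℝ) + (k : ℝ) = -β - n + k - 1 := by
          push_cast; ring
        rw [eB]; ring
      rw [Finset.sum_add_distrib, ← e1, ← e2, ← Finset.sum_add_distrib]
      unfold Sfun
      refine Finset.sum_congr rfl fun j _ => ?_
      simp only [hc']
      ring

theorem stmt_18 (u β : ℝ) (hu : 0 < u) (hβ : β < 0) (m : ℕ) (α : ℝ)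
    (h1 : (m : ℝ) < α) (h2 : α < m + 1) :
    (∃ x : ℝ, 0 < x ∧
      iteratedDeriv (m + 2) (fun y : ℝ => y ^ α * (y + u) ^ (-β)) x < 0) ∧
    ∃ δ : ℝ, 0 < δ ∧ ∀ x : ℝ, 0 < x → x < δ →
      iteratedDeriv (m + 2) (fun y : ℝ => y ^ α * (y + u) ^ (-β)) x < 0 := by
  obtain ⟨c, hc, hS⟩ := key u β hu α (m + 2)
  have hcneg : c (m + 2) < 0 := by
    rw [hc, Finset.prod_range_succ]
    apply mul_neg_of_pos_of_neg
    · apply Finset.prod_pos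
      intro j hj
      have hj' : (j : ℝ) ≤ m := by
        exact_mod_cast Nat.lt_succ_iff.mp (Finset.mem_range.mp hj)
      linarith
    · push_cast; linarith
  set h : ℝ → ℝ := fun x => ∑ k ∈ Finset.range (m + 2 + 1),
      c k * x ^ (m + 2 - k) * (x + u) ^ (-β - (m + 2 : ℕ) + k) with hdef
  have hcont : ContinuousAt h 0 := by
    apply tendsto_finset_sum
    intro k hk
    have hxu : ContinuousAt (fun x : ℝ => (x + u) ^ (-β - (m + 2 : ℕ) + k)) 0 := by
      apply ContinuousAt.rpow_const (continuousAt_id.add continuousAt_const)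
      left; simpa using hu.ne'
    exact (continuousAt_const.mul (continuousAt_id.pow _)).mul hxu
  have h0 : h 0 = c (m + 2) * u ^ (-β) := by
    simp only [hdef]
    rw [Finset.sum_range_succ]
    rw [Finset.sum_eq_zero]
    · simp
    · intro k hk
      have : m + 2 - k ≠ 0 := by
        have := Finset.mem_range.mp hk; omega
      simp [zero_pow this]
  have hneg : ∀ᶠ x in 𝓝 (0:ℝ), h x < 0 := by
    apply hcont.eventually_lt continuousAt_const
    rw [h0]
    exact mul_neg_of_neg_of_pos hcneg (Real.rpow_pos_of_pos hu _)
  obtain ⟨δ, hδ, hδ'⟩ := Metric.eventually_nhds_iff.mp hneg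
  have hfact : ∀ x : ℝ, 0 < x →
      Sfun u α β (m + 2) c x = x ^ (α - ((m + 2 : ℕ) : ℝ)) * h x := by
    intro x hx
    unfold Sfun
    simp only [hdef]
    rw [Finset.mul_sum]
    refine Finset.sum_congr rfl fun k hk => ?_
    have hk' : k ≤ m + 2 := by
      have := Finset.mem_range.mp hk; omega
    have e : α - (k : ℝ) = (α - ((m + 2 : ℕ) : ℝ)) + ((m + 2 - k : ℕ) : ℝ) := by
      rw [Nat.cast_sub hk']; push_cast; ring
    rw [e, Real.rpow_add hx, Real.rpow_natCast]
    ring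
  have main : ∀ x : ℝ, 0 < x → x < δ →
      iteratedDeriv (m + 2) (fun y : ℝ => y ^ α * (y + u) ^ (-β)) x < 0 := by
    intro x hx hxδ
    rw [hS x hx, hfact x hx]
    apply mul_neg_of_pos_of_neg (Real.rpow_pos_of_pos hx _)
    apply hδ'
    rw [Real.dist_eq, sub_zero, abs_of_pos hx]
    exact hxδ
  exact ⟨⟨δ / 2, half_pos hδ, main _ (half_pos hδ) (half_lt_self hδ)⟩, δ, hδ, main⟩
end

section
/- Let u > 0, β ≥ 0, and suppose α − β ∈ (m, m+1) for some nonnegative integer m, with α ≥ 0. Then there exists x > 0 such that the (m+2)-th derivative of the function x ↦ x^α (x + u)^{−β} is strictly negative at x; indeed this derivative is negative for all sufficiently large x. -/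
open Matrix Filter Set Topology

/-- The `n`-th derivative of `x ↦ x^α (x+u)^{-β}` on `(0,∞)` is a finite sum of
terms `c_i x^{a_i} (x+u)^{b_i}` with `a_i + b_i = α - β - n` and total coefficient
the falling factorial `∏_{j<n} (α - β - j)`. -/
lemma stmt_19_key (u α β : ℝ) (hu : 0 < u) (n : ℕ) :
    ∃ (ι : Type) (_ : Fintype ι) (c a b : ι → ℝ),
      (∀ i, a i + b i = α - β - n) ∧
      (∑ i, c i) = (∏ j ∈ Finset.range n, (α - β - j)) ∧
      ∀ x : ℝ, 0 < x → iteratedDeriv n (fun y : ℝ => y ^ α * (y + u) ^ (-β)) x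
        = ∑ i, c i * x ^ a i * (x + u) ^ b i := by
  induction n with
  | zero =>
    refine ⟨Unit, inferInstance, fun _ => 1, fun _ => α, fun _ => -β, by simp [sub_eq_add_neg],
      by simp, fun x hx => by simp [iteratedDeriv_zero]⟩
  | succ n ih =>
    obtain ⟨ι, _, c, a, b, hab, hsum, hrep⟩ := ih
    refine ⟨ι ⊕ ι, inferInstance,
      Sum.elim (fun i => c i * a i) (fun i => c i * b i),
      Sum.elim (fun i => a i - 1) a,
      Sum.elim b (fun i => b i - 1), ?_, ?_, ?_⟩
    · rintro (i | i) <;> simp <;> push_cast <;> [linarith [hab i]; linarith [hab i]]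
    · rw [Fintype.sum_sum_type]
      simp only [Sum.elim_inl, Sum.elim_inr]
      have : ∑ i, c i * a i + ∑ i, c i * b i = ∑ i, c i * (a i + b i) := by
        rw [← Finset.sum_add_distrib]; congr 1; ext i; ring
      rw [this]
      have : ∑ i, c i * (a i + b i) = (α - β - n) * ∑ i, c i := by
        rw [Finset.mul_sum]; congr 1; ext i; rw [hab i]; ring
      rw [this, hsum, Finset.prod_range_succ]; ring
    · intro x hx
      have heq : iteratedDeriv n (fun y : ℝ => y ^ α * (y + u) ^ (-β))
          =ᶠ[𝓝 x] fun x => ∑ i, c i * x ^ a i * (x + u) ^ b i := by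
        filter_upwards [Ioi_mem_nhds hx] with y hy using hrep y hy
      have hd : ∀ i : ι, HasDerivAt (fun x : ℝ => c i * x ^ a i * (x + u) ^ b i)
          (c i * (a i * x ^ (a i - 1)) * (x + u) ^ b i
            + c i * x ^ a i * (b i * (x + u) ^ (b i - 1))) x := by
        intro i
        have hA : HasDerivAt (fun x : ℝ => x ^ a i) (a i * x ^ (a i - 1)) x :=
          Real.hasDerivAt_rpow_const (Or.inl hx.ne')
        have hB : HasDerivAt (fun x : ℝ => (x + u) ^ b i) (b i * (x + u) ^ (b i - 1)) x := by
          have := ((hasDerivAt_id x).add_const u).rpow_const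
            (p := b i) (Or.inl (by positivity))
          simpa using this
        simpa [mul_assoc] using (hA.const_mul (c i)).fun_mul hB
      have hD : HasDerivAt (fun x : ℝ => ∑ i, c i * x ^ a i * (x + u) ^ b i)
          (∑ i, (c i * (a i * x ^ (a i - 1)) * (x + u) ^ b i
            + c i * x ^ a i * (b i * (x + u) ^ (b i - 1)))) x :=
        HasDerivAt.fun_sum fun i _ => hd i
      rw [iteratedDeriv_succ, heq.deriv_eq, hD.deriv, Fintype.sum_sum_type]
      rw [← Finset.sum_add_distrib]
      congr 1; ext i
      simp only [Sum.elim_inl, Sum.elim_inr]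
      ring

theorem stmt_19 (u β : ℝ) (hu : 0 < u) (hβ : 0 ≤ β) (m : ℕ) (α : ℝ) (hα : 0 ≤ α)
    (h1 : (m : ℝ) < α - β) (h2 : α - β < m + 1) :
    (∃ x : ℝ, 0 < x ∧
      iteratedDeriv (m + 2) (fun y : ℝ => y ^ α * (y + u) ^ (-β)) x < 0) ∧
    ∃ X : ℝ, ∀ x : ℝ, X < x →
      iteratedDeriv (m + 2) (fun y : ℝ => y ^ α * (y + u) ^ (-β)) x < 0 := by
  obtain ⟨ι, _, c, a, b, hab, hsum, hrep⟩ := stmt_19_key u α β hu (m + 2)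
  set γ : ℝ := α - β with hγ
  -- the total coefficient is negative
  have hC : (∑ i, c i) < 0 := by
    rw [hsum]
    have : (m : ℕ) + 2 = (m + 1) + 1 := rfl
    rw [this, Finset.prod_range_succ]
    apply mul_neg_of_pos_of_neg
    · apply Finset.prod_pos
      intro j hj
      have hj' : (j : ℝ) ≤ m := by
        exact_mod_cast Nat.lt_succ_iff.mp (Finset.mem_range.mp hj)
      linarith
    · push_cast; linarith
  -- the normalized sum tends to the total coefficient
  have hg : Tendsto (fun x : ℝ => ∑ i, c i * ((x + u) / x) ^ b i) atTop (𝓝 (∑ i, c i)) := by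
    apply tendsto_finset_sum
    intro i _
    have h1' : Tendsto (fun x : ℝ => (x + u) / x) atTop (𝓝 1) := by
      have : (fun x : ℝ => (x + u) / x) =ᶠ[atTop] fun x => 1 + u / x := by
        filter_upwards [eventually_gt_atTop 0] with x hx
        field_simp
      rw [tendsto_congr' this]
      have : Tendsto (fun x : ℝ => u / x) atTop (𝓝 0) :=
        tendsto_const_nhds.div_atTop tendsto_id
      simpa using tendsto_const_nhds.add this
    have h2' : Tendsto (fun t : ℝ => c i * t ^ b i) (𝓝 1) (𝓝 (c i * (1 : ℝ) ^ b i)) := by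
      exact (Real.continuousAt_rpow_const 1 (b i) (Or.inl one_ne_zero)).const_smul (c i) |>.tendsto
    simpa [Function.comp_def] using h2'.comp h1'
  -- eventually the derivative equals the normalized sum times `x ^ (γ - (m+2))`
  have hEq : ∀ᶠ x in atTop,
      iteratedDeriv (m + 2) (fun y : ℝ => y ^ α * (y + u) ^ (-β)) x
        = (∑ i, c i * ((x + u) / x) ^ b i) * x ^ (γ - (m + 2 : ℕ)) := by
    filter_upwards [eventually_gt_atTop 0] with x hx
    rw [hrep x hx, Finset.sum_mul]
    congr 1; ext i
    have hxu : (0 : ℝ) < x + u := by linarith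
    have hb : x ^ b i ≠ 0 := (Real.rpow_pos_of_pos hx _).ne'
    rw [Real.div_rpow hxu.le hx.le, ← hab i, Real.rpow_add hx]
    field_simp
  have hgneg : ∀ᶠ x in atTop, (∑ i, c i * ((x + u) / x) ^ b i) < 0 :=
    hg.eventually_lt_const hC
  have H : ∀ᶠ x in atTop,
      iteratedDeriv (m + 2) (fun y : ℝ => y ^ α * (y + u) ^ (-β)) x < 0 := by
    filter_upwards [hEq, hgneg, eventually_gt_atTop 0] with x he hn hx
    rw [he]
    exact mul_neg_of_neg_of_pos hn (Real.rpow_pos_of_pos hx _)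
  obtain ⟨X, hX⟩ := eventually_atTop.mp H
  constructor
  · exact ⟨max X 0 + 1, by positivity, hX _ (by have := le_max_left X 0; linarith)⟩
  · exact ⟨X, fun x hx => hX x hx.le⟩
end
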